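/- arXiv:2401.09251 — 4 statements merged into one kernel-verified Lean document; each statement's English description precedes it below -/
import Mathlib

section
/- Let A, B₁, B₂, E ≥ 0, m ∈ [0,1), C > 0, ε ∈ (0,1) with 1/ε ∈ ℕ, and set α = (1−m)(1−ε)². There exist constants C₁, C₂ > 0 depending only on C such that: if nonnegative real numbers v₀, v₁, …, v_{1/ε} satisfy, for every integer 1 ≤ i ≤ 1/ε, v_i − v_{i−1} ≥ max{ ε(1−m)·[(1−ε)^i·A + ε(1−ε)^{2i−2}(i−1)·B₁] − 2ε·v_{i−1}, ε(1−m)(1−ε)^i·B₂ − ε·v_{i−1} } − 3ε²·v_{i−1} − Cε²·E, then (1 + C₁ε)·max_{0 ≤ i ≤ 1/ε} v_i ≥ α·max_{t_s ∈ [0,1]} max_{T ∈ [t_s,1]} { ((T − t_s)e^{−T} − C₂ε)·B₂ + (t_s²·e^{−t_s−T}/2 − C₂ε)·B₁ + (e^{−T} − e^{−t_s−T} − C₂ε)·A } − C₂ε·E. -/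
noncomputable section

lemma aux_one_sub_le_exp (x : ℝ) : 1 - x ≤ Real.exp (-x) := by
  have := Real.add_one_le_exp (-x); linarith

lemma aux_exp_neg_le_quad {x : ℝ} (hx : 0 ≤ x) : Real.exp (-x) ≤ 1 - x + x^2 := by
  have hpos : (0:ℝ) < 1 + x := by linarith
  have h1 : 1 + x ≤ Real.exp x := by have := Real.add_one_le_exp x; linarith
  have h2 : Real.exp (-x) ≤ (1+x)⁻¹ := by
    rw [Real.exp_neg]
    exact inv_anti₀ hpos h1
  have h3 : (1+x)⁻¹ ≤ 1 - x + x^2 := by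
    rw [inv_le_iff_one_le_mul₀ hpos]; nlinarith
  linarith

lemma aux_pow_lower (a c d t ε : ℝ) (j : ℕ) (ha : 0 ≤ a)
    (hexp : Real.exp (-(ε + c*ε^2)) ≤ a) (ht : 0 ≤ t) (hd : 0 ≤ d) (hε : 0 ≤ ε)
    (hc : 0 ≤ c) (hjt : (j:ℝ)*ε ≤ t + d*ε) (hj2 : (j:ℝ)*ε ≤ 2) :
    Real.exp (-t) - (d + 2*c)*ε ≤ a^j := by
  have h1 : Real.exp (-(ε + c*ε^2)) ^ j ≤ a ^ j :=
    pow_le_pow_left₀ (Real.exp_nonneg _) hexp j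
  have h2 : Real.exp ((j:ℝ) * (-(ε + c*ε^2))) = Real.exp (-(ε + c*ε^2)) ^ j :=
    Real.exp_nat_mul _ j
  have hx : -(t + d*ε + 2*c*ε) ≤ (j:ℝ) * (-(ε + c*ε^2)) := by
    have hh : c*ε*((j:ℝ)*ε) ≤ c*ε*2 := mul_le_mul_of_nonneg_left hj2 (mul_nonneg hc hε)
    nlinarith
  have h3 : Real.exp (-(t + d*ε + 2*c*ε)) ≤ a ^ j := by
    calc Real.exp (-(t + d*ε + 2*c*ε)) ≤ Real.exp ((j:ℝ) * (-(ε + c*ε^2))) :=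
          Real.exp_le_exp.mpr hx
      _ = _ := h2
      _ ≤ a ^ j := h1
  have h4 : Real.exp (-t) * (1 - (d + 2*c)*ε) ≤ Real.exp (-(t + d*ε + 2*c*ε)) := by
    have hb := aux_one_sub_le_exp ((d + 2*c)*ε)
    have he : Real.exp (-(t + d*ε + 2*c*ε)) = Real.exp (-t) * Real.exp (-((d+2*c)*ε)) := by
      rw [← Real.exp_add]; ring_nf
    rw [he]
    exact mul_le_mul_of_nonneg_left hb (Real.exp_nonneg _)
  have h5 : Real.exp (-t) ≤ 1 := Real.exp_le_one_iff.mpr (by linarith)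
  nlinarith [Real.exp_nonneg (-t),
    mul_nonneg (mul_nonneg (by linarith : (0:ℝ) ≤ d + 2*c) hε)
      (by linarith : 0 ≤ 1 - Real.exp (-t))]

lemma aux_prod_lower (D1 D2 X Y a b ε : ℝ) (hD1 : 0 ≤ D1) (hD2 : 0 ≤ D2)
    (h1 : X - a*ε ≤ D1) (h2 : Y - b*ε ≤ D2) (hX0 : 0 ≤ X) (hX : X ≤ 1)
    (hY0 : 0 ≤ Y) (hY : Y ≤ 1) (hε : 0 ≤ ε) (ha : 0 ≤ a) (hb : 0 ≤ b) :
    X*Y - (a+b)*ε ≤ D1*D2 := by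
  rcases le_or_gt X (a*ε) with h | h
  · nlinarith [mul_nonneg hD1 hD2]
  rcases le_or_gt Y (b*ε) with h' | h'
  · nlinarith [mul_nonneg hD1 hD2]
  · have key := mul_le_mul h1 h2 (by linarith) hD1
    nlinarith [mul_nonneg (mul_nonneg ha hb) (sq_nonneg ε),
      mul_le_mul_of_nonneg_left hY (mul_nonneg ha hε),
      mul_le_mul_of_nonneg_left hX (mul_nonneg hb hε)]

lemma aux_coef_le (D Z c ε : ℝ) (hD0 : 0 ≤ D) (hDZ : Z - c*ε ≤ D)
    (hε : 0 ≤ ε) (hε1 : ε ≤ 1) : (1-ε)^2 * (Z - c*ε) ≤ D := by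
  rcases le_or_gt (Z - c*ε) 0 with h | h
  · nlinarith [sq_nonneg (1-ε)]
  · have h2 : (1-ε)^2 ≤ 1 := by nlinarith
    have := mul_le_mul_of_nonneg_right h2 h.le
    linarith

lemma aux_mul_le_one {x y : ℝ} (hx0 : 0 ≤ x) (hx1 : x ≤ 1) (hy0 : 0 ≤ y) (hy1 : y ≤ 1) :
    x*y ≤ 1 := by nlinarith

lemma aux_eps1 (ε : ℝ) (h0 : 0 ≤ ε) (h20 : ε ≤ 1/20) : 0 ≤ 1-2*ε-3*ε^2 := by nlinarith

lemma aux_eps2 (ε : ℝ) (h0 : 0 ≤ ε) (h20 : ε ≤ 1/20) : 0 ≤ 1-ε-3*ε^2 := by nlinarith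

lemma aux_eps3 (ε : ℝ) (h0 : 0 ≤ ε) (h20 : ε ≤ 1/20) : Real.exp (-(ε + 2*ε^2)) ≤ 1 - ε := by
  have h := aux_exp_neg_le_quad (show (0:ℝ) ≤ ε + 2*ε^2 by nlinarith)
  have key : 0 ≤ ε^2*(1 - 4*ε - 4*ε^2) := mul_nonneg (sq_nonneg ε) (by nlinarith)
  nlinarith [key]

lemma aux_eps4 (ε : ℝ) (h0 : 0 ≤ ε) (h20 : ε ≤ 1/20) :
    Real.exp (-(ε + 5*ε^2)) ≤ 1 - ε - 3*ε^2 := by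
  have h := aux_exp_neg_le_quad (show (0:ℝ) ≤ ε + 5*ε^2 by nlinarith)
  have key : 0 ≤ ε^2*(2 - (1+5*ε)^2) := mul_nonneg (sq_nonneg ε) (by nlinarith)
  nlinarith [key]

lemma aux_eps5 (ε : ℝ) (h0 : 0 ≤ ε) (h20 : ε ≤ 1/20) :
    1 - 2*ε - 3*ε^2 ≤ Real.exp (-(2*ε)) := by
  have h1 := aux_one_sub_le_exp (2*ε + 3*ε^2)
  have h2 : Real.exp (-(2*ε + 3*ε^2)) ≤ Real.exp (-(2*ε)) :=
    Real.exp_le_exp.mpr (by nlinarith)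
  linarith

lemma aux_fac1 (ε x : ℝ) (hε0 : 0 ≤ ε) (hε20 : ε ≤ 1/20) (hx0 : 0 ≤ x) (hx1 : x*ε ≤ 1) :
    (1-4*ε)*((1-ε)^2 + 2*ε^2*(x-1)) ≤ 1 := by
  nlinarith [mul_le_mul_of_nonneg_left hx1 (show (0:ℝ) ≤ 2*ε by linarith),
    mul_nonneg (mul_nonneg (mul_nonneg hε0 hε0) hε0) hx0]

lemma aux_fac2 (ε d : ℝ) (hε0 : 0 ≤ ε) (hε20 : ε ≤ 1/20) (hd0 : 0 ≤ d) (hd1 : d*ε ≤ 1) :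
    (1-4*ε)*(3*ε^2*d) ≤ 4*ε*(1-ε) := by
  nlinarith [mul_le_mul_of_nonneg_left hd1 (show (0:ℝ) ≤ 3*ε by linarith),
    mul_nonneg (mul_nonneg (mul_nonneg hε0 hε0) hε0) hd0]


set_option maxHeartbeats 2000000 in
/-- the final Corollary of Section 4.1, abstract form: with
`α = (1−m)(1−ε)²`, there are constants `C₁, C₂ > 0` depending only on `C` such that any
nonnegative sequence `v₀, …, v_{1/ε}` satisfying the stated recursive lower bound satisfies
`(1 + C₁ε)·max_{0 ≤ i ≤ 1/ε} vᵢ ≥ α·max_{t_s ∈ [0,1]} max_{T ∈ [t_s,1]}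
  {((T−t_s)e^{−T} − C₂ε)·B₂ + (t_s²e^{−t_s−T}/2 − C₂ε)·B₁ + (e^{−T} − e^{−t_s−T} − C₂ε)·A}
  − C₂ε·E` (maxima over real intervals taken as suprema). -/
theorem stmt_11 (C : ℝ) (hC : 0 < C) :
    ∃ C₁ C₂ : ℝ, 0 < C₁ ∧ 0 < C₂ ∧
      ∀ (A B₁ B₂ E m ε : ℝ) (N : ℕ) (v : ℕ → ℝ),
        0 ≤ A → 0 ≤ B₁ → 0 ≤ B₂ → 0 ≤ E → 0 ≤ m → m < 1 → 0 < ε → ε < 1 →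
        (N : ℝ) * ε = 1 →
        (∀ i ≤ N, 0 ≤ v i) →
        (∀ i, 1 ≤ i → i ≤ N →
          max (ε * (1 - m) * ((1 - ε)^i * A + ε * (1 - ε)^(2*i-2) * ((i : ℝ) - 1) * B₁)
                - 2*ε * v (i-1))
              (ε * (1 - m) * (1 - ε)^i * B₂ - ε * v (i-1))
            - 3*ε^2 * v (i-1) - C*ε^2*E ≤ v i - v (i-1)) →
        (1 - m) * (1 - ε)^2 *
          sSup {x : ℝ | ∃ ts ∈ Set.Icc (0 : ℝ) 1, ∃ T ∈ Set.Icc ts 1,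
            x = ((T - ts) * Real.exp (-T) - C₂*ε) * B₂
              + (ts^2 * Real.exp (-ts - T) / 2 - C₂*ε) * B₁
              + (Real.exp (-T) - Real.exp (-ts - T) - C₂*ε) * A}
          - C₂*ε*E
        ≤ (1 + C₁*ε) * sSup {x : ℝ | ∃ i ≤ N, x = v i} := by
  refine ⟨1, 40 + 2*C, one_pos, by linarith, ?_⟩
  intro A B₁ B₂ E m ε N v hA hB₁ hB₂ hE hm hm1 hε hε1 hNε hv hrec
  set C₂ : ℝ := 40 + 2*C with hC₂def
  clear_value C₂
  have hC₂40 : (40:ℝ) ≤ C₂ := by simp [hC₂def]; linarith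
  have hm0 : (0:ℝ) ≤ 1 - m := by linarith
  -- the max of v
  set M := sSup {x : ℝ | ∃ i ≤ N, x = v i} with hMdef
  have hsetv : {x : ℝ | ∃ i ≤ N, x = v i} = v '' Set.Iic N := by
    ext x; simp [Set.mem_image, Set.mem_Iic, eq_comm]
  have hbdd : BddAbove {x : ℝ | ∃ i ≤ N, x = v i} := by
    rw [hsetv]; exact ((Set.finite_Iic N).image v).bddAbove
  have hvM : ∀ i, i ≤ N → v i ≤ M := fun i hi => le_csSup hbdd ⟨i, hi, rfl⟩
  have hM0 : 0 ≤ M := le_trans (hv 0 (Nat.zero_le N)) (hvM 0 (Nat.zero_le N))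
  -- key pointwise claim
  have key : ∀ ts ∈ Set.Icc (0:ℝ) 1, ∀ T ∈ Set.Icc ts 1,
      (1 - m) * (1 - ε)^2 *
        (((T - ts) * Real.exp (-T) - C₂*ε) * B₂
          + (ts^2 * Real.exp (-ts - T) / 2 - C₂*ε) * B₁
          + (Real.exp (-T) - Real.exp (-ts - T) - C₂*ε) * A) ≤ M + C₂*ε*E := by
    rintro ts ⟨hts0, hts1⟩ T ⟨hTts, hT1⟩
    have hT0 : 0 ≤ T := le_trans hts0 hTts
    have heT1 : Real.exp (-T) ≤ 1 := Real.exp_le_one_iff.mpr (by linarith)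
    have heT0 : (0:ℝ) < Real.exp (-T) := Real.exp_pos _
    have hets1 : Real.exp (-ts) ≤ 1 := Real.exp_le_one_iff.mpr (by linarith)
    have hets0 : (0:ℝ) < Real.exp (-ts) := Real.exp_pos _
    have he2ts1 : Real.exp (-(2*ts)) ≤ 1 := Real.exp_le_one_iff.mpr (by linarith)
    have he2ts0 : (0:ℝ) < Real.exp (-(2*ts)) := Real.exp_pos _
    have hetsT : Real.exp (-ts - T) ≤ Real.exp (-T) := Real.exp_le_exp.mpr (by linarith)
    have hetsT0 : (0:ℝ) < Real.exp (-ts - T) := Real.exp_pos _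
    have hets2 : Real.exp (-(2*ts)) ≤ Real.exp (-ts) := Real.exp_le_exp.mpr (by linarith)
    have heTt1 : Real.exp (-(T-ts)) ≤ 1 := Real.exp_le_one_iff.mpr (by linarith)
    have heTt0 : (0:ℝ) < Real.exp (-(T-ts)) := Real.exp_pos _
    have hZB2_0 : 0 ≤ (T - ts) * Real.exp (-T) := mul_nonneg (by linarith) heT0.le
    have hZB2_1 : (T - ts) * Real.exp (-T) ≤ 1 := aux_mul_le_one (by linarith) (by linarith) heT0.le heT1
    have hZB1_0 : 0 ≤ ts^2 * Real.exp (-ts - T) / 2 := by positivity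
    have hetsT1 : Real.exp (-ts - T) ≤ 1 := Real.exp_le_one_iff.mpr (by linarith)
    have hts2 : ts^2 ≤ 1 := pow_le_one₀ hts0 hts1
    have hZB1_1 : ts^2 * Real.exp (-ts - T) / 2 ≤ 1 := by
      have := aux_mul_le_one (sq_nonneg ts) hts2 hetsT0.le hetsT1
      linarith
    have hZA_0 : 0 ≤ Real.exp (-T) - Real.exp (-ts - T) := by linarith
    have hZA_1 : Real.exp (-T) - Real.exp (-ts - T) ≤ 1 := by linarith
    have hα0 : (0:ℝ) ≤ (1-m)*(1-ε)^2 := mul_nonneg hm0 (sq_nonneg _)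
    have hC₂εE0 : (0:ℝ) ≤ C₂*ε*E := mul_nonneg (mul_nonneg (by linarith) hε.le) hE
    rcases le_or_gt ε (1/20) with hε20 | hε20
    · -- MAIN CASE: ε small
      have hε0 : (0:ℝ) ≤ ε := hε.le
      have hq0 : (0:ℝ) ≤ 1 - ε := by linarith
      have hr0 : (0:ℝ) ≤ 1 - 2*ε - 3*ε^2 := aux_eps1 ε hε0 hε20
      have hs0 : (0:ℝ) ≤ 1 - ε - 3*ε^2 := aux_eps2 ε hε0 hε20
      have h4ε0 : (0:ℝ) ≤ 1 - 4*ε := by linarith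
      have hN0 : 0 < N := by
        rcases Nat.eq_zero_or_pos N with h | h
        · exfalso; rw [h] at hNε; norm_num at hNε
        · exact h
      have hN0' : (0:ℝ) < N := by exact_mod_cast hN0
      set k := ⌈ts * (N:ℝ)⌉₊ with hkdef
      set n := ⌈T * (N:ℝ)⌉₊ with hndef
      have hkN : k ≤ N := Nat.ceil_le.mpr (mul_le_of_le_one_left (Nat.cast_nonneg N) hts1)
      have hnN : n ≤ N := Nat.ceil_le.mpr (mul_le_of_le_one_left (Nat.cast_nonneg N) hT1)
      have hkn : k ≤ n := Nat.ceil_le_ceil (mul_le_mul_of_nonneg_right hTts (Nat.cast_nonneg N))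
      have hjε1 : ∀ j : ℕ, j ≤ N → (j:ℝ)*ε ≤ 1 := by
        intro j hj
        have h1 : (j:ℝ) ≤ (N:ℝ) := Nat.cast_le.mpr hj
        calc (j:ℝ)*ε ≤ (N:ℝ)*ε := mul_le_mul_of_nonneg_right h1 hε.le
          _ = 1 := hNε
      have hkε1 : (k:ℝ)*ε ≤ 1 := hjε1 k hkN
      have hnε1 : (n:ℝ)*ε ≤ 1 := hjε1 n hnN
      have hkts : ts ≤ (k:ℝ)*ε := by
        have h1 := mul_le_mul_of_nonneg_right (Nat.le_ceil (ts*(N:ℝ))) hε0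
        have h2 : ts * (N:ℝ) * ε = ts := by rw [mul_assoc, hNε, mul_one]
        linarith
      have hkts' : (k:ℝ)*ε ≤ ts + ε := by
        have h0 : 0 ≤ ts * (N:ℝ) := mul_nonneg hts0 hN0'.le
        have h1 := mul_le_mul_of_nonneg_right (le_of_lt (Nat.ceil_lt_add_one h0)) hε0
        have h2 : ts * (N:ℝ) * ε = ts := by rw [mul_assoc, hNε, mul_one]
        have h3 : (ts * (N:ℝ) + 1) * ε = ts * (N:ℝ) * ε + ε := by ring
        linarith
      have hnT : T ≤ (n:ℝ)*ε := by
        have h1 := mul_le_mul_of_nonneg_right (Nat.le_ceil (T*(N:ℝ))) hε0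
        have h2 : T * (N:ℝ) * ε = T := by rw [mul_assoc, hNε, mul_one]
        linarith
      have hnT' : (n:ℝ)*ε ≤ T + ε := by
        have h0 : 0 ≤ T * (N:ℝ) := mul_nonneg hT0 hN0'.le
        have h1 := mul_le_mul_of_nonneg_right (le_of_lt (Nat.ceil_lt_add_one h0)) hε0
        have h2 : T * (N:ℝ) * ε = T := by rw [mul_assoc, hNε, mul_one]
        have h3 : (T * (N:ℝ) + 1) * ε = T * (N:ℝ) * ε + ε := by ring
        linarith
      -- exponential one-step bounds
      have hq_exp : Real.exp (-(ε + 2*ε^2)) ≤ 1 - ε := aux_eps3 ε hε0 hε20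
      have hs_exp : Real.exp (-(ε + 5*ε^2)) ≤ 1 - ε - 3*ε^2 := aux_eps4 ε hε0 hε20
      have hr_exp : 1 - 2*ε - 3*ε^2 ≤ Real.exp (-(2*ε)) := aux_eps5 ε hε0 hε20
      -- PHASE 1
      have phase1 : ∀ i, i ≤ k →
          (1-m) * (A * ((1-4*ε) * ((1-ε)^i - (1-2*ε-3*ε^2)^i))
            + B₁ * ((1-4*ε) * (ε^2*(i:ℝ)*((i:ℝ)-1)/2) * (1-ε)^(2*i)))
            - (i:ℝ)*C*ε^2*E ≤ v i := by
        intro i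
        induction i with
        | zero =>
          intro _
          have h0 := hv 0 (Nat.zero_le N)
          norm_num
          linarith
        | succ j ih =>
          intro hjk
          have ihj := ih (Nat.le_of_succ_le hjk)
          have hjN : j + 1 ≤ N := le_trans hjk hkN
          have hjε : (j:ℝ)*ε ≤ 1 := hjε1 j (by omega)
          have hrec' := hrec (j+1) (by omega) hjN
          simp only [Nat.add_sub_cancel] at hrec'
          have hvj0 : 0 ≤ v j := hv j (by omega)
          have hXle := le_max_left
            (ε * (1 - m) * ((1 - ε)^(j+1) * A
              + ε * (1 - ε)^(2*(j+1)-2) * ((↑(j+1) : ℝ) - 1) * B₁) - 2*ε * v j)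
            (ε * (1 - m) * (1 - ε)^(j+1) * B₂ - ε * v j)
          have hstep : (1-2*ε-3*ε^2) * v j
              + ε*(1-m)*((1-ε)^(j+1)*A + ε*(1-ε)^(2*(j+1)-2)*((↑(j+1) : ℝ)-1)*B₁)
              - C*ε^2*E ≤ v (j+1) := by
            linarith [hrec', hXle]
          have h2j : 2*(j+1) - 2 = 2*j := by omega
          rw [h2j] at hstep
          push_cast at hstep
          have hA_step : (1-4*ε)*((1-ε)^(j+1) - (1-2*ε-3*ε^2)^(j+1))
              ≤ (1-2*ε-3*ε^2)*((1-4*ε)*((1-ε)^j - (1-2*ε-3*ε^2)^j)) + ε*(1-ε)^(j+1) := by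
            rw [pow_succ, pow_succ, pow_succ]
            linarith [mul_nonneg (pow_nonneg hq0 j)
              (mul_nonneg (mul_nonneg hε0 hε0) hε0)]
          have h2εj : 2*ε*((j:ℝ)*ε) ≤ 2*ε*1 := mul_le_mul_of_nonneg_left hjε (by linarith)
          have hfac : (1-4*ε)*((1-ε)^2 + 2*ε^2*((j:ℝ)-1)) ≤ 1 :=
            aux_fac1 ε (j:ℝ) hε0 hε20 (Nat.cast_nonneg j) hjε
          have hinner : 0 ≤ (j:ℝ) * (1 - (1-4*ε)*((1-ε)^2 + 2*ε^2*((j:ℝ)-1))) :=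
            mul_nonneg (Nat.cast_nonneg j) (by linarith)
          have hB_step : (1-4*ε)*(ε^2*((j:ℝ)+1)*(j:ℝ)/2)*(1-ε)^(2*(j+1))
              ≤ (1-2*ε-3*ε^2)*((1-4*ε)*(ε^2*(j:ℝ)*((j:ℝ)-1)/2)*(1-ε)^(2*j))
                + ε^2*(1-ε)^(2*j)*(j:ℝ) := by
            have hpow : (1-ε)^(2*(j+1)) = (1-ε)^(2*j) * (1-ε)^2 := by
              have h22 : 2*(j+1) = 2*j + 2 := by omega
              rw [h22, pow_add]
            rw [hpow]
            linarith [mul_nonneg (mul_nonneg (sq_nonneg ε) (pow_nonneg hq0 (2*j))) hinner]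
          have hEj : (1-2*ε-3*ε^2) * ((j:ℝ)*C*ε^2*E) ≤ (j:ℝ)*C*ε^2*E :=
            mul_le_of_le_one_left (by positivity) (by linarith [sq_nonneg ε])
          have hm1' := mul_le_mul_of_nonneg_left hA_step (mul_nonneg hm0 hA)
          have hm2' := mul_le_mul_of_nonneg_left hB_step (mul_nonneg hm0 hB₁)
          have hm4' := mul_le_mul_of_nonneg_left ihj hr0
          push_cast
          linarith [hm1', hm2', hm4', hstep, hEj]
      -- PHASE 2
      have phase2 : ∀ i, k ≤ i → i ≤ n →
          (1-ε-3*ε^2)^(i-k) *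
            ((1-m) * (A * ((1-4*ε) * ((1-ε)^k - (1-2*ε-3*ε^2)^k))
              + B₁ * ((1-4*ε) * (ε^2*(k:ℝ)*((k:ℝ)-1)/2) * (1-ε)^(2*k))))
            + (1-m) * B₂ * ((1-4*ε) * ((i:ℝ)-(k:ℝ)) * ε * (1-ε)^i)
            - (i:ℝ)*C*ε^2*E ≤ v i := by
        intro i hki
        induction i, hki using Nat.le_induction with
        | base =>
          intro _
          have h0 := phase1 k le_rfl
          simp only [Nat.sub_self, pow_zero, one_mul, sub_self, mul_zero, zero_mul, add_zero]
          linarith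
        | succ j hkj ih =>
          intro hjn
          have ihj := ih (by omega)
          have hjN : j + 1 ≤ N := le_trans hjn hnN
          have hrec' := hrec (j+1) (by omega) hjN
          simp only [Nat.add_sub_cancel] at hrec'
          have hvj0 : 0 ≤ v j := hv j (by omega)
          have hYle := le_max_right
            (ε * (1 - m) * ((1 - ε)^(j+1) * A
              + ε * (1 - ε)^(2*(j+1)-2) * ((↑(j+1) : ℝ) - 1) * B₁) - 2*ε * v j)
            (ε * (1 - m) * (1 - ε)^(j+1) * B₂ - ε * v j)
          have hstep : (1-ε-3*ε^2) * v j + ε*(1-m)*(1-ε)^(j+1)*B₂ - C*ε^2*E ≤ v (j+1) := by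
            linarith [hrec', hYle]
          have hd0 : (0:ℝ) ≤ (j:ℝ) - (k:ℝ) := by
            have : (k:ℝ) ≤ (j:ℝ) := Nat.cast_le.mpr hkj
            linarith
          have hdε : ((j:ℝ)-(k:ℝ))*ε ≤ 1 := by
            have h1 := hjε1 j (by omega)
            have h2 := mul_nonneg (Nat.cast_nonneg (α := ℝ) k) hε0
            have h3 : ((j:ℝ)-(k:ℝ))*ε = (j:ℝ)*ε - (k:ℝ)*ε := by ring
            linarith
          have hfac2 : (1-4*ε)*(3*ε^2*((j:ℝ)-(k:ℝ))) ≤ 4*ε*(1-ε) :=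
            aux_fac2 ε ((j:ℝ)-(k:ℝ)) hε0 hε20 hd0 hdε
          have hθ : (1-4*ε)*((j:ℝ)+1-(k:ℝ))*ε*(1-ε)^(j+1)
              ≤ (1-ε-3*ε^2)*((1-4*ε)*((j:ℝ)-(k:ℝ))*ε*(1-ε)^j) + ε*(1-ε)^(j+1) := by
            rw [pow_succ]
            linarith [mul_le_mul_of_nonneg_left hfac2
              (mul_nonneg hε0 (pow_nonneg hq0 j))]
          have hEj : (1-ε-3*ε^2) * ((j:ℝ)*C*ε^2*E) ≤ (j:ℝ)*C*ε^2*E :=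
            mul_le_of_le_one_left (by positivity) (by linarith [sq_nonneg ε])
          have hpows : (1-ε-3*ε^2)^(j+1-k) = (1-ε-3*ε^2)^(j-k) * (1-ε-3*ε^2) := by
            have h : j+1-k = (j-k)+1 := by omega
            rw [h, pow_succ]
          have hm1' := mul_le_mul_of_nonneg_left hθ (mul_nonneg hm0 hB₂)
          have hm4' := mul_le_mul_of_nonneg_left ihj hs0
          rw [hpows]
          push_cast
          linarith [hm1', hm4', hstep, hEj]
      -- endpoint estimates
      have hvn := phase2 n hkn le_rfl
      have hqk : Real.exp (-ts) - (1 + 2*2)*ε ≤ (1-ε)^k :=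
        aux_pow_lower (1-ε) 2 1 ts ε k hq0 hq_exp hts0 zero_le_one hε0 (by norm_num)
          (by linarith) (by linarith)
      have hqn : Real.exp (-T) - (1 + 2*2)*ε ≤ (1-ε)^n :=
        aux_pow_lower (1-ε) 2 1 T ε n hq0 hq_exp hT0 zero_le_one hε0 (by norm_num)
          (by linarith) (by linarith)
      have hq2k : Real.exp (-(2*ts)) - (2 + 2*2)*ε ≤ (1-ε)^(2*k) :=
        aux_pow_lower (1-ε) 2 2 (2*ts) ε (2*k) hq0 hq_exp (by linarith) (by norm_num) hε0
          (by norm_num) (by push_cast; linarith) (by push_cast; linarith)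
      have hsp : Real.exp (-(T-ts)) - (1 + 2*5)*ε ≤ (1-ε-3*ε^2)^(n-k) :=
        aux_pow_lower (1-ε-3*ε^2) 5 1 (T-ts) ε (n-k) hs0 hs_exp (by linarith) zero_le_one
          hε0 (by norm_num)
          (by rw [Nat.cast_sub hkn]
              have h3 : ((n:ℝ)-(k:ℝ))*ε = (n:ℝ)*ε - (k:ℝ)*ε := by ring
              linarith)
          (by rw [Nat.cast_sub hkn]
              have h2 := mul_nonneg (Nat.cast_nonneg (α := ℝ) k) hε0
              have h3 : ((n:ℝ)-(k:ℝ))*ε = (n:ℝ)*ε - (k:ℝ)*ε := by ring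
              linarith)
      have hrk : (1-2*ε-3*ε^2)^k ≤ Real.exp (-(2*ts)) := by
        calc (1-2*ε-3*ε^2)^k ≤ (Real.exp (-(2*ε)))^k :=
              pow_le_pow_left₀ hr0 hr_exp k
          _ = Real.exp ((k:ℝ)*(-(2*ε))) := (Real.exp_nat_mul _ k).symm
          _ ≤ Real.exp (-(2*ts)) := Real.exp_le_exp.mpr (by linarith [hkts])
      have hsp0 : (0:ℝ) ≤ (1-ε-3*ε^2)^(n-k) := pow_nonneg hs0 _
      have hqkr : (1-2*ε-3*ε^2)^k ≤ (1-ε)^k := pow_le_pow_left₀ hr0 (by linarith [sq_nonneg ε]) k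
      have hkk0 : (0:ℝ) ≤ (k:ℝ)*((k:ℝ)-1) := by
        rcases Nat.eq_zero_or_pos k with h | h
        · simp [h]
        · have h1 : (1:ℝ) ≤ (k:ℝ) := by exact_mod_cast h
          exact mul_nonneg (by linarith) (by linarith)
      have hεk2 : ts^2/2 - 1*ε ≤ ε^2*(k:ℝ)*((k:ℝ)-1)/2 := by
        have hsq : ts*ts ≤ ((k:ℝ)*ε)*((k:ℝ)*ε) :=
          mul_self_le_mul_self hts0 hkts
        have hkε2 : ε*((k:ℝ)*ε) ≤ ε*1 := mul_le_mul_of_nonneg_left hkε1 hε0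
        have h3 : ε^2*(k:ℝ)*((k:ℝ)-1)/2 = (((k:ℝ)*ε)*((k:ℝ)*ε) - ε*((k:ℝ)*ε))/2 := by ring
        have h4 : ts^2 = ts*ts := sq ts
        linarith
      -- assemble DA
      have hmidA0 : (0:ℝ) ≤ (1-4*ε)*((1-ε)^k - (1-2*ε-3*ε^2)^k) :=
        mul_nonneg h4ε0 (by linarith)
      have p1 : (1:ℝ)*(Real.exp (-ts) - Real.exp (-(2*ts))) - (4+5)*ε
          ≤ (1-4*ε)*((1-ε)^k - (1-2*ε-3*ε^2)^k) :=
        aux_prod_lower (1-4*ε) ((1-ε)^k - (1-2*ε-3*ε^2)^k)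
          1 (Real.exp (-ts) - Real.exp (-(2*ts))) 4 5 ε h4ε0 (by linarith)
          (by linarith) (by linarith) zero_le_one le_rfl (by linarith) (by linarith)
          hε0 (by norm_num) (by norm_num)
      have p2 : Real.exp (-(T-ts))*(Real.exp (-ts) - Real.exp (-(2*ts))) - (11+9)*ε
          ≤ (1-ε-3*ε^2)^(n-k)*((1-4*ε)*((1-ε)^k - (1-2*ε-3*ε^2)^k)) :=
        aux_prod_lower ((1-ε-3*ε^2)^(n-k)) ((1-4*ε)*((1-ε)^k - (1-2*ε-3*ε^2)^k))
          (Real.exp (-(T-ts))) (Real.exp (-ts) - Real.exp (-(2*ts))) 11 9 ε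
          hsp0 hmidA0 (by linarith) (by linarith) heTt0.le heTt1 (by linarith) (by linarith)
          hε0 (by norm_num) (by norm_num)
      have hidA : Real.exp (-(T-ts))*(Real.exp (-ts) - Real.exp (-(2*ts)))
          = Real.exp (-T) - Real.exp (-ts - T) := by
        rw [mul_sub, ← Real.exp_add, ← Real.exp_add,
          show -(T-ts) + -ts = -T from by ring,
          show -(T-ts) + -(2*ts) = -ts - T from by ring]
      have hDA : (Real.exp (-T) - Real.exp (-ts - T)) - 20*ε
          ≤ (1-ε-3*ε^2)^(n-k)*((1-4*ε)*((1-ε)^k - (1-2*ε-3*ε^2)^k)) := by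
        linarith [p2, hidA.ge, hidA.le]
      have hDA0 : (0:ℝ) ≤ (1-ε-3*ε^2)^(n-k)*((1-4*ε)*((1-ε)^k - (1-2*ε-3*ε^2)^k)) :=
        mul_nonneg hsp0 hmidA0
      -- assemble DB1
      have hmidB0 : (0:ℝ) ≤ (1-4*ε)*(ε^2*(k:ℝ)*((k:ℝ)-1)/2) := by
        apply mul_nonneg h4ε0
        have : (0:ℝ) ≤ ε^2*((k:ℝ)*((k:ℝ)-1)) := mul_nonneg (sq_nonneg ε) hkk0
        linarith
      have q1 : (1:ℝ)*(ts^2/2) - (4+1)*ε ≤ (1-4*ε)*(ε^2*(k:ℝ)*((k:ℝ)-1)/2) :=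
        aux_prod_lower (1-4*ε) (ε^2*(k:ℝ)*((k:ℝ)-1)/2) 1 (ts^2/2) 4 1 ε h4ε0
          (by linarith [mul_nonneg (sq_nonneg ε) hkk0]) (by linarith) (by linarith)
          zero_le_one le_rfl (by positivity) (by linarith [hts2]) hε0 (by norm_num) (by norm_num)
      have q2 : (ts^2/2)*Real.exp (-(2*ts)) - (5+6)*ε
          ≤ ((1-4*ε)*(ε^2*(k:ℝ)*((k:ℝ)-1)/2))*((1-ε)^(2*k)) :=
        aux_prod_lower ((1-4*ε)*(ε^2*(k:ℝ)*((k:ℝ)-1)/2)) ((1-ε)^(2*k))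
          (ts^2/2) (Real.exp (-(2*ts))) 5 6 ε hmidB0 (pow_nonneg hq0 _)
          (by linarith) (by linarith) (by positivity) (by linarith [hts2]) he2ts0.le he2ts1
          hε0 (by norm_num) (by norm_num)
      have q3 : Real.exp (-(T-ts))*((ts^2/2)*Real.exp (-(2*ts))) - (11+11)*ε
          ≤ (1-ε-3*ε^2)^(n-k)*(((1-4*ε)*(ε^2*(k:ℝ)*((k:ℝ)-1)/2))*((1-ε)^(2*k))) :=
        aux_prod_lower ((1-ε-3*ε^2)^(n-k)) (((1-4*ε)*(ε^2*(k:ℝ)*((k:ℝ)-1)/2))*((1-ε)^(2*k)))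
          (Real.exp (-(T-ts))) ((ts^2/2)*Real.exp (-(2*ts))) 11 11 ε
          hsp0 (mul_nonneg hmidB0 (pow_nonneg hq0 _)) (by linarith) (by linarith)
          heTt0.le heTt1 (mul_nonneg (by positivity) he2ts0.le)
          (aux_mul_le_one (by positivity) (by linarith [hts2]) he2ts0.le he2ts1)
          hε0 (by norm_num) (by norm_num)
      have hidB1 : Real.exp (-(T-ts))*((ts^2/2)*Real.exp (-(2*ts)))
          = ts^2 * Real.exp (-ts - T) / 2 := by
        rw [show Real.exp (-(T-ts))*((ts^2/2)*Real.exp (-(2*ts)))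
            = ts^2/2*(Real.exp (-(T-ts))*Real.exp (-(2*ts))) from by ring,
          ← Real.exp_add, show -(T-ts) + -(2*ts) = -ts - T from by ring]
        ring
      have hDB1 : ts^2 * Real.exp (-ts - T) / 2 - 22*ε
          ≤ (1-ε-3*ε^2)^(n-k)*((1-4*ε)*(ε^2*(k:ℝ)*((k:ℝ)-1)/2)*(1-ε)^(2*k)) := by
        linarith [q3, hidB1.ge, hidB1.le]
      have hDB10 : (0:ℝ) ≤ (1-ε-3*ε^2)^(n-k)*((1-4*ε)*(ε^2*(k:ℝ)*((k:ℝ)-1)/2)*(1-ε)^(2*k)) :=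
        mul_nonneg hsp0 (mul_nonneg hmidB0 (pow_nonneg hq0 _))
      -- assemble DB2
      have hnk0 : (0:ℝ) ≤ (n:ℝ) - (k:ℝ) := by
        have : (k:ℝ) ≤ (n:ℝ) := Nat.cast_le.mpr hkn
        linarith
      have w1 : (1:ℝ)*(T-ts) - (4+1)*ε ≤ (1-4*ε)*(((n:ℝ)-(k:ℝ))*ε) :=
        aux_prod_lower (1-4*ε) (((n:ℝ)-(k:ℝ))*ε) 1 (T-ts) 4 1 ε
          h4ε0 (mul_nonneg hnk0 hε0) (by linarith)
          (by have h3 : ((n:ℝ)-(k:ℝ))*ε = (n:ℝ)*ε - (k:ℝ)*ε := by ring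
              linarith) zero_le_one le_rfl
          (by linarith) (by linarith) hε0 (by norm_num) (by norm_num)
      have w2 : (T-ts)*Real.exp (-T) - (5+5)*ε
          ≤ ((1-4*ε)*(((n:ℝ)-(k:ℝ))*ε))*((1-ε)^n) :=
        aux_prod_lower ((1-4*ε)*(((n:ℝ)-(k:ℝ))*ε)) ((1-ε)^n) (T-ts) (Real.exp (-T)) 5 5 ε
          (mul_nonneg h4ε0 (mul_nonneg hnk0 hε0)) (pow_nonneg hq0 _)
          (by linarith) (by linarith) (by linarith) (by linarith) heT0.le heT1
          hε0 (by norm_num) (by norm_num)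
      have hDB2 : (T-ts)*Real.exp (-T) - 10*ε
          ≤ (1-4*ε)*((n:ℝ)-(k:ℝ))*ε*(1-ε)^n := by linarith [w2]
      have hDB20 : (0:ℝ) ≤ (1-4*ε)*((n:ℝ)-(k:ℝ))*ε*(1-ε)^n := by
        have := mul_nonneg (mul_nonneg (mul_nonneg h4ε0 hnk0) hε0) (pow_nonneg hq0 n)
        linarith [this]
      -- coefficient comparisons
      have hCc : ∀ c : ℝ, c ≤ 22 → c*ε ≤ C₂*ε := by
        intro c hc
        have : 0 ≤ (C₂ - c)*ε := mul_nonneg (by linarith) hε0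
        linarith
      have hcA := aux_coef_le _ (Real.exp (-T) - Real.exp (-ts - T)) C₂ ε hDA0
        (by linarith [hDA, hCc 20 (by norm_num)]) hε0 (by linarith)
      have hcB1 := aux_coef_le _ (ts^2 * Real.exp (-ts - T) / 2) C₂ ε hDB10
        (by linarith [hDB1, hCc 22 (by norm_num)]) hε0 (by linarith)
      have hcB2 := aux_coef_le _ ((T - ts) * Real.exp (-T)) C₂ ε hDB20
        (by linarith [hDB2, hCc 10 (by norm_num)]) hε0 (by linarith)
      have mm1 := mul_le_mul_of_nonneg_right hcA hA
      have mm2 := mul_le_mul_of_nonneg_right hcB1 hB₁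
      have mm3 := mul_le_mul_of_nonneg_right hcB2 hB₂
      -- error terms
      have hEn : (n:ℝ)*C*ε^2*E ≤ C*ε*E := by
        linarith [mul_le_mul_of_nonneg_right hnε1
          (mul_nonneg (mul_nonneg hC.le hε0) hE)]
      have hCC₂ : C*ε*E ≤ C₂*ε*E := by
        have : 0 ≤ (C₂ - C)*(ε*E) := mul_nonneg (by linarith) (mul_nonneg hε0 hE)
        linarith [this]
      have hvnM : v n ≤ M := hvM n hnN
      have hsum : (1-ε)^2 * (((T - ts) * Real.exp (-T) - C₂*ε) * B₂
            + (ts^2 * Real.exp (-ts - T) / 2 - C₂*ε) * B₁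
            + (Real.exp (-T) - Real.exp (-ts - T) - C₂*ε) * A)
          ≤ (1-ε-3*ε^2)^(n-k)*((1-4*ε)*((1-ε)^k - (1-2*ε-3*ε^2)^k)) * A
            + (1-ε-3*ε^2)^(n-k)*((1-4*ε)*(ε^2*(k:ℝ)*((k:ℝ)-1)/2)*(1-ε)^(2*k)) * B₁
            + (1-4*ε)*((n:ℝ)-(k:ℝ))*ε*(1-ε)^n * B₂ := by
        linarith [mm1, mm2, mm3]
      have hfin := mul_le_mul_of_nonneg_left hsum hm0
      linarith [hfin, hvn, hEn, hCC₂, hvnM]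
    · -- CASE ε large : every coefficient is nonpositive
      have h2 : (2:ℝ) ≤ C₂ * ε := by
        have ha := mul_le_mul_of_nonneg_left hε20.le (by linarith : (0:ℝ) ≤ C₂)
        have hb : (40:ℝ)*(1/20) ≤ C₂*(1/20) := mul_le_mul_of_nonneg_right hC₂40 (by norm_num)
        linarith
      have t1 : ((T - ts) * Real.exp (-T) - C₂*ε) * B₂ ≤ 0 := by
        have h := mul_le_mul_of_nonneg_right
          (show (T - ts) * Real.exp (-T) - C₂*ε ≤ 0 by linarith) hB₂
        simpa using h
      have t2 : (ts^2 * Real.exp (-ts - T) / 2 - C₂*ε) * B₁ ≤ 0 := by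
        have h := mul_le_mul_of_nonneg_right
          (show ts^2 * Real.exp (-ts - T) / 2 - C₂*ε ≤ 0 by linarith) hB₁
        simpa using h
      have t3 : (Real.exp (-T) - Real.exp (-ts - T) - C₂*ε) * A ≤ 0 := by
        have h := mul_le_mul_of_nonneg_right
          (show Real.exp (-T) - Real.exp (-ts - T) - C₂*ε ≤ 0 by linarith) hA
        simpa using h
      have hx : ((T - ts) * Real.exp (-T) - C₂*ε) * B₂
          + (ts^2 * Real.exp (-ts - T) / 2 - C₂*ε) * B₁
          + (Real.exp (-T) - Real.exp (-ts - T) - C₂*ε) * A ≤ 0 := by linarith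
      linarith [mul_nonneg hα0 (neg_nonneg.mpr hx)]

  -- wrap-up
  have hα : (0:ℝ) < (1 - m) * (1 - ε)^2 := by
    have : (0:ℝ) < (1-ε)^2 := pow_pos (by linarith) 2
    exact mul_pos (by linarith) this
  have hb0 : 0 ≤ M + C₂*ε*E := by
    have : 0 ≤ C₂*ε*E := mul_nonneg (mul_nonneg (by linarith) hε.le) hE
    linarith
  have hSle : sSup {x : ℝ | ∃ ts ∈ Set.Icc (0 : ℝ) 1, ∃ T ∈ Set.Icc ts 1,
      x = ((T - ts) * Real.exp (-T) - C₂*ε) * B₂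
        + (ts^2 * Real.exp (-ts - T) / 2 - C₂*ε) * B₁
        + (Real.exp (-T) - Real.exp (-ts - T) - C₂*ε) * A}
      ≤ (M + C₂*ε*E) / ((1 - m) * (1 - ε)^2) := by
    apply Real.sSup_le
    · rintro x ⟨ts, hts, T, hT, rfl⟩
      rw [le_div_iff₀ hα]
      have := key ts hts T hT
      linarith [this]
    · exact div_nonneg hb0 hα.le
  have hfin := mul_le_mul_of_nonneg_left hSle hα.le
  rw [mul_div_cancel₀ _ hα.ne'] at hfin
  linarith [hfin, mul_nonneg hε.le hM0]
end
end

section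
/- In the Algorithm 2 setting, write wⱼ = y⁽ʲ⁾⊛z⁽ʲ⁾. For every integer t_s/ε < i ≤ 1/ε: F(wᵢ) − F(wᵢ₋₁) ≥ ε·[(1−m)(1−ε)^{i−1}·F(p₂*) − F(wᵢ₋₁)] − ε²βD²/2. -/
open scoped InnerProductSpace
open Pointwise Topology Filter

noncomputable section

/-- Vectors in `ℝ^n`, with the Euclidean (ℓ₂) norm and inner product. -/
abbrev Vec (n : ℕ) := EuclideanSpace ℝ (Fin n)

/-- Membership in the box `[0,1]^n`. -/
def inBox {n : ℕ} (x : Vec n) : Prop := ∀ j, 0 ≤ x j ∧ x j ≤ 1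

/-- Coordinate-wise (Hadamard) product `x ⊙ y`. -/
def had {n : ℕ} (x y : Vec n) : Vec n := WithLp.toLp 2 (fun j => x j * y j)

/-- Coordinate-wise probabilistic sum `x ⊛ y`. -/
def psum {n : ℕ} (x y : Vec n) : Vec n := WithLp.toLp 2 (fun j => x j + y j - x j * y j)

/-- The vector `1 - x` (coordinate-wise). -/
def oneM {n : ℕ} (x : Vec n) : Vec n := WithLp.toLp 2 (fun j => 1 - x j)

/-- ℓ∞-norm. -/
def normInf {n : ℕ} (x : Vec n) : ℝ := ⨆ j, |x j|

/-- DR-submodularity of `F : [0,1]^n → ℝ`. -/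
def DRSubmodular {n : ℕ} (F : Vec n → ℝ) : Prop :=
  ∀ a b : Vec n, inBox a → inBox b → (∀ j, a j ≤ b j) →
    ∀ k : ℝ, 0 < k → ∀ i : Fin n, inBox (b + EuclideanSpace.single i k) →
      F (b + EuclideanSpace.single i k) - F b ≤ F (a + EuclideanSpace.single i k) - F a

/-- `P` is down-closed (with respect to the domain `[0,1]^n`). -/
def downClosed {n : ℕ} (P : Set (Vec n)) : Prop :=
  ∀ x y : Vec n, (∀ j, 0 ≤ x j) → (∀ j, x j ≤ y j) → y ∈ P → x ∈ P

/-- The Algorithm 2 setting (`Frank-Wolfe/Continuous-Greedy Hybrid`): `Q ⊆ [0,1]^n` convex,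
`P ⊆ [0,1]^n` down-closed convex, `F : [0,1]^n → [0,∞)` nonnegative β-smooth DR-submodular
with gradient `G`, `ε ∈ (0, 1/30]` with `1/ε = N ∈ ℕ`, `t_s ∈ [0,1]` with `t_s/ε = k ∈ ℕ`,
`m = ‖y⁽⁰⁾‖∞ < 1`, and in each iteration `(a⁽ⁱ⁾, b⁽ⁱ⁾)` solves the corresponding linear
program (phase 1 for `i ≤ t_s/ε`, phase 2 otherwise). -/
structure Alg2Setting {n : ℕ} (Q P : Set (Vec n)) (F : Vec n → ℝ) (G : Vec n → Vec n)
    (β ts ε : ℝ) (k N : ℕ) (y z a b : ℕ → Vec n) : Prop where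
  hQbox : ∀ x ∈ Q, inBox x
  hQconv : Convex ℝ Q
  hPbox : ∀ x ∈ P, inBox x
  hPconv : Convex ℝ P
  hPdown : downClosed P
  hF0 : ∀ x, inBox x → 0 ≤ F x
  hDR : DRSubmodular F
  hGrad : ∀ x, inBox x → HasGradientAt F (G x) x
  hGcont : ContinuousOn G {x : Vec n | inBox x}
  hβ : 0 < β
  hsmooth : ∀ u v : Vec n, inBox u → inBox v → ‖G u - G v‖ ≤ β * ‖u - v‖
  hε0 : 0 < ε
  hε30 : ε ≤ 1/30
  hεN : (N : ℝ) * ε = 1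
  hts0 : 0 ≤ ts
  hts1 : ts ≤ 1
  hk : (k : ℝ) * ε = ts
  hy0Q : y 0 ∈ Q
  hy0min : ∀ x ∈ Q, normInf (y 0) ≤ normInf x
  hm1 : normInf (y 0) < 1
  hz0 : z 0 = 0
  hyrec : ∀ i, 1 ≤ i → i ≤ N → y i = (1-ε) • y (i-1) + ε • a i
  hzrec : ∀ i, 1 ≤ i → i ≤ N → z i = z (i-1) + ε • had (oneM (z (i-1))) (b i)
  hphase1 : ∀ i, 1 ≤ i → i ≤ k →
    a i ∈ Q ∧ b i ∈ P ∧ (∀ j, 0 ≤ a i j + b i j ∧ a i j + b i j ≤ 1) ∧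
    ∀ a' b' : Vec n, a' ∈ Q → b' ∈ P → (∀ j, 0 ≤ a' j + b' j ∧ a' j + b' j ≤ 1) →
      Real.exp (2*ε*i) * ⟪had (G (psum (y (i-1)) (z (i-1)))) (oneM (z (i-1))),
          a' + had b' (oneM (y (i-1)))⟫_ℝ
        + (1 - normInf (y 0)) * Real.exp (ε*i) * (ts - ε*i) *
          ⟪had (G (z (i-1))) (oneM (z (i-1))), b'⟫_ℝ
      ≤ Real.exp (2*ε*i) * ⟪had (G (psum (y (i-1)) (z (i-1)))) (oneM (z (i-1))),
          a i + had (b i) (oneM (y (i-1)))⟫_ℝ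
        + (1 - normInf (y 0)) * Real.exp (ε*i) * (ts - ε*i) *
          ⟪had (G (z (i-1))) (oneM (z (i-1))), b i⟫_ℝ
  hphase2 : ∀ i, k < i → i ≤ N →
    a i = y (i-1) ∧ b i ∈ P ∧
    ∀ b' ∈ P,
      ⟪had (G (psum (y (i-1)) (z (i-1)))) (oneM (z (i-1))),
          had b' (oneM (y (i-1)))⟫_ℝ
      ≤ ⟪had (G (psum (y (i-1)) (z (i-1)))) (oneM (z (i-1))),
          had (b i) (oneM (y (i-1)))⟫_ℝ

/-- The potential function `φ(i) = e^{2(εi − t_s)}·F(y⁽ⁱ⁾ ⊛ z⁽ⁱ⁾)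
  + (1−m)(1−ε)·e^{εi − 2t_s}·(t_s − εi)·F(z⁽ⁱ⁾)`. -/
def phi {n : ℕ} (F : Vec n → ℝ) (m ε ts : ℝ) (y z : ℕ → Vec n) (i : ℕ) : ℝ :=
  Real.exp (2*(ε*i - ts)) * F (psum (y i) (z i))
    + (1 - m)*(1 - ε)*Real.exp (ε*i - 2*ts)*(ts - ε*i) * F (z i)


lemma hasDerivAt_comp_line {n : ℕ} {F : Vec n → ℝ} {G : Vec n → Vec n}
    (hG : ∀ x, inBox x → HasGradientAt F (G x) x)
    (p d : Vec n) (t : ℝ) (h : inBox (p + t • d)) :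
    HasDerivAt (fun s : ℝ => F (p + s • d)) ⟪G (p + t • d), d⟫_ℝ t := by
  have h1 : HasDerivAt (fun s : ℝ => p + s • d) d t := by
    simpa using (hasDerivAt_id t).smul_const d |>.const_add p
  have h2 := ((hG _ h).hasFDerivAt.comp_hasDerivAt t h1)
  simp [InnerProductSpace.toDual_apply_apply] at h2
  exact h2

lemma grad_antitone {n : ℕ} {F : Vec n → ℝ} {G : Vec n → Vec n}
    (hDR : DRSubmodular F) (hG : ∀ x, inBox x → HasGradientAt F (G x) x)
    (u v : Vec n) (hu : inBox u) (hv : inBox v) (huv : ∀ j, u j ≤ v j)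
    (j : Fin n) (hj : u j < v j) : G v j ≤ G u j := by
  have hsingle : ∀ h : ℝ, EuclideanSpace.single j h
      = h • (EuclideanSpace.single j (1:ℝ) : Vec n) := by
    intro h; ext j'; simp [EuclideanSpace.single_apply]
  have hdu : HasDerivAt (fun s : ℝ => F (u + s • (EuclideanSpace.single j (1:ℝ) : Vec n)))
      (G u j) 0 := by
    have := hasDerivAt_comp_line hG u (EuclideanSpace.single j (1:ℝ)) 0 (by simpa using hu)
    simpa [EuclideanSpace.single_apply, EuclideanSpace.inner_single_right] using this
  have hdv : HasDerivAt (fun s : ℝ => F (v + s • (EuclideanSpace.single j (1:ℝ) : Vec n)))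
      (G v j) 0 := by
    have := hasDerivAt_comp_line hG v (EuclideanSpace.single j (1:ℝ)) 0 (by simpa using hv)
    simpa [EuclideanSpace.single_apply, EuclideanSpace.inner_single_right] using this
  have hne : 𝓝[>] (0:ℝ) ≤ 𝓝[≠] (0:ℝ) :=
    nhdsWithin_mono _ (fun x hx => ne_of_gt hx)
  have tu : Tendsto (fun h : ℝ =>
      (F (u + h • (EuclideanSpace.single j (1:ℝ) : Vec n)) - F u)/h)
      (𝓝[>] (0:ℝ)) (𝓝 (G u j)) := by
    have := (hasDerivAt_iff_tendsto_slope.1 hdu).mono_left hne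
    refine this.congr (fun h => ?_)
    simp [slope_def_field]
  have tv : Tendsto (fun h : ℝ =>
      (F v - F (v - h • (EuclideanSpace.single j (1:ℝ) : Vec n)))/h)
      (𝓝[>] (0:ℝ)) (𝓝 (G v j)) := by
    have hneg : Tendsto (fun h : ℝ => -h) (𝓝[>] (0:ℝ)) (𝓝[≠] (0:ℝ)) := by
      refine tendsto_nhdsWithin_of_tendsto_nhds_of_eventually_within _ ?_ ?_
      · exact (continuous_neg.tendsto' 0 0 (by simp)).mono_left nhdsWithin_le_nhds
      · exact eventually_nhdsWithin_of_forall (fun h hh => by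
          simpa using neg_ne_zero.2 (ne_of_gt hh))
    have := (hasDerivAt_iff_tendsto_slope.1 hdv).comp hneg
    refine this.congr (fun h => ?_)
    simp [Function.comp, slope_def_field, sub_eq_add_neg, neg_smul]
    ring
  refine le_of_tendsto_of_tendsto tv tu ?_
  filter_upwards [Ioo_mem_nhdsGT_of_mem (Set.mem_Ico.2 ⟨le_refl (0:ℝ), sub_pos.2 hj⟩)] with h hh
  obtain ⟨hh0, hhlt⟩ := hh
  have happ : ∀ j', (v - h • (EuclideanSpace.single j (1:ℝ) : Vec n)) j'
      = v j' - (if j' = j then h else 0) := by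
    intro j'
    by_cases hjj : j' = j <;> simp [EuclideanSpace.single_apply, hjj]
  have hb : inBox (v - h • (EuclideanSpace.single j (1:ℝ) : Vec n)) := by
    intro j'; rw [happ]
    by_cases hjj : j' = j
    · rw [if_pos hjj]; subst hjj
      exact ⟨by linarith [(hu j').1], by linarith [(hv j').2]⟩
    · rw [if_neg hjj]; simpa using hv j'
  have hab : ∀ j', u j' ≤ (v - h • (EuclideanSpace.single j (1:ℝ) : Vec n)) j' := by
    intro j'; rw [happ]
    by_cases hjj : j' = j
    · rw [if_pos hjj]; subst hjj; linarith
    · rw [if_neg hjj]; simpa using huv j'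
  have hbk : inBox ((v - h • (EuclideanSpace.single j (1:ℝ) : Vec n))
      + EuclideanSpace.single j h) := by
    rw [hsingle h]
    simpa using hv
  have hkey := hDR u _ hu hb hab h hh0 j hbk
  rw [hsingle h] at hkey
  have e1 : v - h • (EuclideanSpace.single j (1:ℝ) : Vec n)
      + h • (EuclideanSpace.single j (1:ℝ) : Vec n) = v := by abel
  rw [e1] at hkey
  gcongr

lemma seg_box {n : ℕ} {x d : Vec n} (hx : inBox x) (hd : ∀ j, 0 ≤ d j)
    {T : ℝ} (hT : inBox (x + T • d)) {t : ℝ} (h0 : 0 ≤ t) (htT : t ≤ T) :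
    inBox (x + t • d) := by
  intro j
  have h1 := (hx j).1
  have h2 := (hT j).2
  have e1 : (x + t • d) j = x j + t * d j := by simp
  have e2 : (x + T • d) j = x j + T * d j := by simp
  rw [e2] at h2
  rw [e1]
  constructor
  · nlinarith [hd j]
  · nlinarith [hd j]

lemma inner_seg_antitone {n : ℕ} {F : Vec n → ℝ} {G : Vec n → Vec n}
    (hDR : DRSubmodular F) (hG : ∀ x, inBox x → HasGradientAt F (G x) x)
    {x d : Vec n} (hx : inBox x) (hd : ∀ j, 0 ≤ d j)
    {T t1 t2 : ℝ} (hT : inBox (x + T • d)) (h0 : 0 ≤ t1) (h12 : t1 ≤ t2) (h2T : t2 ≤ T) :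
    ⟪G (x + t2 • d), d⟫_ℝ ≤ ⟪G (x + t1 • d), d⟫_ℝ := by
  rcases eq_or_lt_of_le h12 with heq | hlt
  · rw [heq]
  have hb1 : inBox (x + t1 • d) := seg_box hx hd hT h0 (le_trans h12 h2T)
  have hb2 : inBox (x + t2 • d) := seg_box hx hd hT (le_trans h0 h12) h2T
  have hle : ∀ j, (x + t1 • d) j ≤ (x + t2 • d) j := by
    intro j; simp only [PiLp.add_apply, PiLp.smul_apply, smul_eq_mul]
    nlinarith [hd j]
  rw [PiLp.inner_apply, PiLp.inner_apply]
  refine Finset.sum_le_sum (fun j _ => ?_)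
  simp only [RCLike.inner_apply, conj_trivial]
  rcases eq_or_lt_of_le (hd j) with hdj | hdj
  · rw [← hdj]; simp
  · have hstrict : (x + t1 • d) j < (x + t2 • d) j := by
      simp only [PiLp.add_apply, PiLp.smul_apply, smul_eq_mul]
      nlinarith
    have := grad_antitone hDR hG _ _ hb1 hb2 hle j hstrict
    nlinarith


lemma seg_cont {n : ℕ} {F : Vec n → ℝ} {G : Vec n → Vec n}
    (hG : ∀ x, inBox x → HasGradientAt F (G x) x)
    {x d : Vec n} (hx : inBox x) (hd : ∀ j, 0 ≤ d j)
    {T : ℝ} (hT0 : 0 ≤ T) (hT : inBox (x + T • d)) :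
    ContinuousOn (fun t : ℝ => F (x + t • d)) (Set.Icc 0 T) := by
  intro t ht
  have hb : inBox (x + t • d) := seg_box hx hd hT ht.1 ht.2
  exact ((hasDerivAt_comp_line hG x d t hb).continuousAt).continuousWithinAt

/-- concavity along nonneg directions: below-tangent inequality. -/
lemma below_tangent {n : ℕ} {F : Vec n → ℝ} {G : Vec n → Vec n}
    (hDR : DRSubmodular F) (hG : ∀ x, inBox x → HasGradientAt F (G x) x)
    {x d : Vec n} (hx : inBox x) (hd : ∀ j, 0 ≤ d j) (hxd : inBox (x + d)) :
    F (x + d) - F x ≤ ⟪G x, d⟫_ℝ := by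
  have hT : inBox (x + (1:ℝ) • d) := by simpa using hxd
  obtain ⟨c, hc, hceq⟩ := exists_hasDerivAt_eq_slope (fun t : ℝ => F (x + t • d))
    (fun t => ⟪G (x + t • d), d⟫_ℝ) one_pos
    (seg_cont hG hx hd zero_le_one hT)
    (fun t ht => hasDerivAt_comp_line hG x d t (seg_box hx hd hT ht.1.le ht.2.le))
  have h1 : ⟪G (x + c • d), d⟫_ℝ ≤ ⟪G (x + (0:ℝ) • d), d⟫_ℝ :=
    inner_seg_antitone hDR hG hx hd hT le_rfl hc.1.le hc.2.le
  have h0 : (x + (0:ℝ) • d) = x := by simp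
  rw [h0] at h1
  have : (F (x + (1:ℝ) • d) - F (x + (0:ℝ) • d)) / (1 - 0) = ⟪G (x + c • d), d⟫_ℝ := hceq.symm
  simp only [one_smul, zero_smul, add_zero, sub_zero, div_one] at this
  linarith

/-- F(x ⊛ p) ≥ (1-s) F(p)  for  x ≤ s coordinatewise. -/
lemma psum_lower {n : ℕ} {F : Vec n → ℝ} {G : Vec n → Vec n}
    (hDR : DRSubmodular F) (hG : ∀ x, inBox x → HasGradientAt F (G x) x)
    (hF0 : ∀ x, inBox x → 0 ≤ F x)
    {x p : Vec n} (hx : inBox x) (hp : inBox p)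
    {s : ℝ} (hs0 : 0 ≤ s) (hs1 : s ≤ 1) (hxs : ∀ j, x j ≤ s) :
    (1 - s) * F p ≤ F (psum x p) := by
  rcases eq_or_lt_of_le hs0 with hs00 | hspos
  · -- s = 0 : x = 0, psum x p = p
    have : psum x p = p := by
      ext j
      have h1 := (hx j).1
      have h2 := hxs j
      have : x j = 0 := le_antisymm (by rw [← hs00] at h2; exact h2) h1
      simp [psum, this]
    rw [this, ← hs00]
    simp
  rcases eq_or_lt_of_le hs1 with hs11 | hslt
  · -- s = 1
    rw [hs11]
    have : inBox (psum x p) := by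
      intro j
      have h1 := (hx j); have h2 := (hp j)
      constructor
      · simp only [psum]; nlinarith
      · simp only [psum]; nlinarith
    simpa using hF0 _ this
  -- 0 < s < 1
  set d : Vec n := WithLp.toLp 2 (fun j => (1 - p j) * x j : Fin n → ℝ) with hdd
  have hd : ∀ j, 0 ≤ d j := by
    intro j; have := hx j; have := hp j
    simp only [hdd]; nlinarith [(hx j).1, (hp j).2]
  have happ : ∀ (t : ℝ) (j : Fin n), (p + t • d) j = p j + t * ((1 - p j) * x j) := by
    intro t j; simp [hdd]
  have hT : inBox (p + (1/s) • d) := by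
    intro j
    rw [happ]
    have h1 := (hp j).1; have h2 := (hp j).2
    have h3 := (hx j).1; have h4 := hxs j
    have h5 : (1/s) * x j ≤ 1 := by
      rw [div_mul_eq_mul_div, one_mul, div_le_one hspos]; exact h4
    have h6 : 0 ≤ (1/s) * x j := by positivity
    constructor <;> nlinarith
  have h1s : (1:ℝ) ≤ 1/s := by
    rw [le_div_iff₀ hspos]; linarith
  have hpsum : psum x p = p + (1:ℝ) • d := by
    ext j
    rw [happ]
    simp [psum]; ring
  -- MVT on [0,1]
  obtain ⟨c₁, hc₁, hceq₁⟩ := exists_hasDerivAt_eq_slope (fun t : ℝ => F (p + t • d))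
    (fun t => ⟪G (p + t • d), d⟫_ℝ) one_pos
    ((seg_cont hG hp hd (by positivity) hT).mono (Set.Icc_subset_Icc le_rfl h1s))
    (fun t ht => hasDerivAt_comp_line hG p d t
      (seg_box hp hd hT ht.1.le (le_trans ht.2.le h1s)))
  rcases eq_or_lt_of_le h1s with h1s' | h1s'
  · -- s = 1/... impossible since s<1 gives 1 < 1/s; but if s=1... excluded; 1 = 1/s → s = 1
    exfalso
    have : s = 1 := by field_simp at h1s'; linarith
    linarith
  -- MVT on [1, 1/s]
  obtain ⟨c₂, hc₂, hceq₂⟩ := exists_hasDerivAt_eq_slope (fun t : ℝ => F (p + t • d))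
    (fun t => ⟪G (p + t • d), d⟫_ℝ) h1s'
    ((seg_cont hG hp hd (by positivity) hT).mono (Set.Icc_subset_Icc zero_le_one le_rfl))
    (fun t ht => hasDerivAt_comp_line hG p d t
      (seg_box hp hd hT (le_trans zero_le_one ht.1.le) ht.2.le))
  have hanti : ⟪G (p + c₂ • d), d⟫_ℝ ≤ ⟪G (p + c₁ • d), d⟫_ℝ :=
    inner_seg_antitone hDR hG hp hd hT hc₁.1.le (le_trans hc₁.2.le hc₂.1.le) hc₂.2.le
  have hFnn : 0 ≤ F (p + (1/s) • d) := hF0 _ hT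
  -- algebra
  rw [hpsum]
  have e₁ : F (p + (1:ℝ) • d) - F (p + (0:ℝ) • d) = ⟪G (p + c₁ • d), d⟫_ℝ := by
    have := hceq₁.symm
    field_simp at this
    linarith [this]
  have e₂ : F (p + (1/s) • d) - F (p + (1:ℝ) • d)
      = (1/s - 1) * ⟪G (p + c₂ • d), d⟫_ℝ := by
    have := hceq₂.symm
    rw [div_eq_iff (by intro hc; rw [sub_eq_zero] at hc; rw [hc] at h1s'; exact lt_irrefl _ h1s' : 1/s - 1 ≠ 0)] at this
    linear_combination this
  have h0 : (p + (0:ℝ) • d) = p := by simp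
  rw [h0] at e₁
  have hkey : (1 - s) * (F (p + (1:ℝ) • d) - F p) ≥ s * (F (p + (1/s) • d) - F (p + (1:ℝ) • d)) := by
    have hss : s * (1/s - 1) = 1 - s := by field_simp
    calc (1 - s) * (F (p + (1:ℝ) • d) - F p) = (1 - s) * ⟪G (p + c₁ • d), d⟫_ℝ := by rw [e₁]
    _ ≥ (1 - s) * ⟪G (p + c₂ • d), d⟫_ℝ := by nlinarith
    _ = s * ((1/s - 1) * ⟪G (p + c₂ • d), d⟫_ℝ) := by rw [← mul_assoc, hss]
    _ = s * (F (p + (1/s) • d) - F (p + (1:ℝ) • d)) := by rw [e₂]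
  nlinarith [mul_nonneg hspos.le hFnn]

lemma seg_box2 {n : ℕ} {x u : Vec n} (hx : inBox x) (hxu : inBox (x + u))
    {t : ℝ} (h0 : 0 ≤ t) (h1 : t ≤ 1) : inBox (x + t • u) := by
  intro j
  have e1 : (x + t • u) j = x j + t * u j := by simp
  have e2 := (hxu j); have e3 := (hx j)
  simp only [PiLp.add_apply] at e2
  rw [e1]
  constructor <;> nlinarith [e2.1, e2.2, e3.1, e3.2]

lemma descent {n : ℕ} {F : Vec n → ℝ} {G : Vec n → Vec n} {β : ℝ}
    (hG : ∀ x, inBox x → HasGradientAt F (G x) x)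
    (hGcont : ContinuousOn G {x : Vec n | inBox x}) (hβ : 0 ≤ β)
    (hsmooth : ∀ u v : Vec n, inBox u → inBox v → ‖G u - G v‖ ≤ β * ‖u - v‖)
    {x u : Vec n} (hx : inBox x) (hxu : inBox (x + u)) :
    ⟪G x, u⟫_ℝ - β/2 * ‖u‖^2 ≤ F (x + u) - F x := by
  have hseg : ∀ t ∈ Set.Icc (0:ℝ) 1, inBox (x + t • u) :=
    fun t ht => seg_box2 hx hxu ht.1 ht.2
  have hderiv : ∀ t ∈ Set.uIcc (0:ℝ) 1,
      HasDerivAt (fun s : ℝ => F (x + s • u)) ⟪G (x + t • u), u⟫_ℝ t := by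
    rw [Set.uIcc_of_le zero_le_one]
    exact fun t ht => hasDerivAt_comp_line hG x u t (hseg t ht)
  have hcontG : ContinuousOn (fun t : ℝ => G (x + t • u)) (Set.Icc 0 1) := by
    refine hGcont.comp ?_ ?_
    · exact (continuous_const.add (continuous_id.smul continuous_const)).continuousOn
    · exact fun t ht => hseg t ht
  have hcont : ContinuousOn (fun t : ℝ => ⟪G (x + t • u), u⟫_ℝ) (Set.Icc 0 1) :=
    hcontG.inner continuousOn_const
  have hint : IntervalIntegrable (fun t : ℝ => ⟪G (x + t • u), u⟫_ℝ)
      MeasureTheory.volume 0 1 := by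
    apply ContinuousOn.intervalIntegrable
    rwa [Set.uIcc_of_le zero_le_one]
  have hftc := intervalIntegral.integral_eq_sub_of_hasDerivAt hderiv hint
  simp only [one_smul, zero_smul, add_zero] at hftc
  have hlow : ∀ t ∈ Set.Icc (0:ℝ) 1,
      ⟪G x, u⟫_ℝ - β * ‖u‖^2 * t ≤ ⟪G (x + t • u), u⟫_ℝ := by
    intro t ht
    have hdiff : ⟪G (x + t • u), u⟫_ℝ = ⟪G x, u⟫_ℝ + ⟪G (x + t • u) - G x, u⟫_ℝ := by
      rw [inner_sub_left]; ring
    have hc : |⟪G (x + t • u) - G x, u⟫_ℝ| ≤ ‖G (x + t • u) - G x‖ * ‖u‖ :=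
      abs_real_inner_le_norm _ _
    have hnorm : ‖G (x + t • u) - G x‖ ≤ β * (t * ‖u‖) := by
      have := hsmooth _ _ (hseg t ht) hx
      have e : x + t • u - x = t • u := by abel
      rw [e, norm_smul] at this
      simpa [abs_of_nonneg ht.1] using this
    have hun : 0 ≤ ‖u‖ := norm_nonneg u
    have habs := abs_le.1 hc
    nlinarith [habs.1, mul_le_mul_of_nonneg_right hnorm hun]
  have hintlow : IntervalIntegrable (fun t : ℝ => ⟪G x, u⟫_ℝ - β * ‖u‖^2 * t)
      MeasureTheory.volume 0 1 := by
    apply ContinuousOn.intervalIntegrable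
    exact (continuous_const.sub (continuous_const.mul continuous_id)).continuousOn
  have hmono := intervalIntegral.integral_mono_on zero_le_one hintlow hint hlow
  rw [hftc] at hmono
  have hval : (∫ t in (0:ℝ)..1, (⟪G x, u⟫_ℝ - β * ‖u‖^2 * t))
      = ⟪G x, u⟫_ℝ - β/2 * ‖u‖^2 := by
    rw [intervalIntegral.integral_sub intervalIntegrable_const (by
      apply ContinuousOn.intervalIntegrable
      exact (continuous_const.mul continuous_id).continuousOn)]
    rw [intervalIntegral.integral_const_mul, integral_id, intervalIntegral.integral_const]
    norm_num
    ring
  rw [hval] at hmono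
  exact hmono

set_option maxHeartbeats 3000000 in
/-- Lemma 4.18 / `lem:increase_second_part`: in the Algorithm 2 setting,
with `wⱼ = y⁽ʲ⁾ ⊛ z⁽ʲ⁾`, for every `t_s/ε < i ≤ 1/ε`:
`F(wᵢ) − F(wᵢ₋₁) ≥ ε·[(1−m)(1−ε)^{i−1}·F(p₂*) − F(wᵢ₋₁)] − ε²βD²/2`. -/
theorem stmt_16 {n : ℕ} (Q P : Set (Vec n)) (F : Vec n → ℝ) (G : Vec n → Vec n)
    (β ts ε : ℝ) (k N : ℕ) (y z a b : ℕ → Vec n)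
    (H : Alg2Setting Q P F G β ts ε k N y z a b)
    (q p o : Vec n) (hq : q ∈ Q) (hp : p ∈ P) (hqp : ∀ j, q j + p j ≤ 1)
    (ho : o = q + p) (p₂ : Vec n) (hp₂ : p₂ ∈ P)
    (m : ℝ) (hm : m = normInf (y 0))
    (D : ℝ) (hD : D = Metric.diam ((Q + P) ∩ {x : Vec n | inBox x})) :
    ∀ i, k < i → i ≤ N →
      ε * ((1 - m) * (1 - ε)^(i-1) * F p₂ - F (psum (y (i-1)) (z (i-1))))
        - ε^2*β*D^2/2
      ≤ F (psum (y i) (z i)) - F (psum (y (i-1)) (z (i-1))) := by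
  obtain ⟨hQbox, hQconv, hPbox, hPconv, hPdown, hF0, hDR, hGrad, hGcont, hβ, hsmooth,
    hε0, hε30, hεN, hts0, hts1, hk, hy0Q, hy0min, hm1, hz0, hyrec, hzrec, hphase1, hphase2⟩ := H
  have hε1 : ε < 1 := lt_of_le_of_lt hε30 (by norm_num)
  have hm0 : 0 ≤ m := by
    rw [hm]; exact Real.iSup_nonneg (fun j => abs_nonneg _)
  have hmlt : m < 1 := hm ▸ hm1
  have hy0m : ∀ j, y 0 j ≤ m := by
    intro j
    rw [hm]
    have hb : BddAbove (Set.range fun j' => |y 0 j'|) :=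
      Set.Finite.bddAbove (Set.finite_range _)
    exact le_trans (le_abs_self _) (le_ciSup hb j)
  -- the invariant
  have inv : ∀ i, i ≤ N → y i ∈ Q ∧ inBox (z i) ∧
      ∀ j, (1-m)*(1-ε)^i ≤ (1 - y i j)*(1 - z i j) := by
    intro i
    induction i with
    | zero =>
      intro _
      refine ⟨hy0Q, ?_, ?_⟩
      · rw [hz0]; intro j; simp
      · intro j
        rw [hz0]
        have := hy0m j
        simp only [pow_zero, mul_one]
        have : (0 : Vec n) j = 0 := rfl
        rw [this]
        have := hy0m j
        linarith
    | succ i ih =>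
      intro hsN
      have hiN : i ≤ N := by omega
      obtain ⟨hyQ, hzbox, hprod⟩ := ih hiN
      have hybox : inBox (y i) := hQbox _ hyQ
      have hyr := hyrec (i+1) (by omega) hsN
      have hzr := hzrec (i+1) (by omega) hsN
      simp only [Nat.add_sub_cancel] at hyr hzr
      -- facts about a (i+1), b (i+1)
      have hfacts : a (i+1) ∈ Q ∧ b (i+1) ∈ P ∧
          (∀ j, (1-ε) * ((1 - y i j)*(1 - z i j)) ≤ (1 - y (i+1) j)*(1 - z (i+1) j)) := by
        have hyapp : ∀ j, y (i+1) j = (1-ε) * y i j + ε * a (i+1) j := by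
          intro j; rw [hyr]; simp
        have hzapp : ∀ j, z (i+1) j = z i j + ε * ((1 - z i j) * b (i+1) j) := by
          intro j; rw [hzr]; simp [had, oneM]
        rcases le_or_gt (i+1) k with hik | hik
        · obtain ⟨haQ, hbP, hab01, _⟩ := hphase1 (i+1) (by omega) hik
          refine ⟨haQ, hbP, ?_⟩
          intro j
          rw [hyapp, hzapp]
          have hB := hPbox _ hbP j
          have hA := hQbox _ haQ j
          have hab := hab01 j
          have hY := hybox j
          have hZ := hzbox j
          have hεB : (0:ℝ) ≤ 1 - ε * b (i+1) j := by nlinarith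
          have hw0 : (0:ℝ) ≤ 1 - z i j := sub_nonneg.2 hZ.2
          have h1 := mul_nonneg (mul_nonneg (mul_nonneg hw0 hε0.le)
            (by linarith [hab.2] : (0:ℝ) ≤ 1 - a (i+1) j - b (i+1) j)) hεB
          have h2 := mul_nonneg (mul_nonneg (mul_nonneg (mul_nonneg hw0 hε0.le) hB.1) hε0.le)
            (sub_nonneg.2 hB.2)
          have h3 := mul_nonneg (mul_nonneg (mul_nonneg (mul_nonneg hw0 hε0.le) hB.1)
            (by linarith : (0:ℝ) ≤ 1 - ε)) hY.1
          nlinarith [h1, h2, h3]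
        · obtain ⟨haeq, hbP, _⟩ := hphase2 (i+1) hik hsN
          simp only [Nat.add_sub_cancel] at haeq
          refine ⟨by rw [haeq]; exact hyQ, hbP, ?_⟩
          intro j
          rw [hyapp, hzapp, haeq]
          have hB := hPbox _ hbP j
          have hY := hybox j
          have hZ := hzbox j
          nlinarith [mul_nonneg (mul_nonneg (sub_nonneg.2 hY.2) (sub_nonneg.2 hZ.2))
            (mul_nonneg hε0.le (sub_nonneg.2 hB.2))]
      obtain ⟨haQ, hbP, hstep⟩ := hfacts
      have hB : inBox (b (i+1)) := hPbox _ hbP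
      refine ⟨?_, ?_, ?_⟩
      · rw [hyr]
        exact hQconv hyQ haQ (by linarith) hε0.le (by ring)
      · intro j
        have : z (i+1) j = z i j + ε * ((1 - z i j) * b (i+1) j) := by
          rw [hzr]; simp [had, oneM]
        rw [this]
        have hZ := hzbox j
        have hBj := hB j
        constructor
        · nlinarith [mul_nonneg (mul_nonneg hε0.le (sub_nonneg.2 hZ.2)) hBj.1, hZ.1]
        · nlinarith [mul_nonneg (sub_nonneg.2 hZ.2) (by linarith : (0:ℝ) ≤ 1 - ε),
            mul_nonneg (mul_nonneg hε0.le (sub_nonneg.2 hZ.2)) (sub_nonneg.2 hBj.2)]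
      · intro j
        have h1 := hstep j
        have h2 := hprod j
        have h3 : (0:ℝ) ≤ (1-ε) := by linarith
        calc (1-m)*(1-ε)^(i+1) = (1-ε) * ((1-m)*(1-ε)^i) := by ring
        _ ≤ (1-ε) * ((1 - y i j)*(1 - z i j)) := by nlinarith
        _ ≤ _ := h1
  -- main argument
  intro i hki hiN
  obtain ⟨i', rfl⟩ : ∃ i', i = i'+1 := ⟨i-1, by omega⟩
  simp only [Nat.add_sub_cancel]
  obtain ⟨haeq, hbP, hopt⟩ := hphase2 (i'+1) hki hiN
  simp only [Nat.add_sub_cancel] at haeq hopt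
  obtain ⟨hYQ, hZbox, hprod⟩ := inv i' (by omega)
  have hYbox : inBox (y i') := hQbox _ hYQ
  have hBbox : inBox (b (i'+1)) := hPbox _ hbP
  have hyr := hyrec (i'+1) (by omega) hiN
  have hzr := hzrec (i'+1) (by omega) hiN
  simp only [Nat.add_sub_cancel] at hyr hzr
  have hy : y (i'+1) = y i' := by
    rw [hyr, haeq]
    ext j
    simp
    ring
  set w : Vec n := psum (y i') (z i') with hw
  set v : Vec n := WithLp.toLp 2 (fun j => (1 - z i' j) * ((1 - y i' j) * b (i'+1) j) : Fin n → ℝ) with hv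
  have hvapp : ∀ j, v j = (1 - z i' j) * ((1 - y i' j) * b (i'+1) j) := fun j => rfl
  have hwapp : ∀ j, w j = y i' j + z i' j - y i' j * z i' j := fun j => rfl
  have hwbox : inBox w := by
    intro j
    have hY := hYbox j; have hZ := hZbox j
    rw [hwapp]
    constructor
    · nlinarith [mul_nonneg hZ.1 (sub_nonneg.2 hY.2), hY.1]
    · nlinarith [mul_nonneg (sub_nonneg.2 hY.2) (sub_nonneg.2 hZ.2)]
  have hvpos : ∀ j, 0 ≤ v j := by
    intro j
    have hY := hYbox j; have hZ := hZbox j; have hB := hBbox j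
    rw [hvapp]
    nlinarith [mul_nonneg (sub_nonneg.2 hZ.2) (mul_nonneg (sub_nonneg.2 hY.2) hB.1)]
  have hwv : psum (y (i'+1)) (z (i'+1)) = w + ε • v := by
    rw [hy, hzr]
    ext j
    simp [psum, had, oneM, hvapp, hwapp]
    ring
  have hwvbox : inBox (w + ε • v) := by
    intro j
    have hY := hYbox j; have hZ := hZbox j; have hB := hBbox j
    have e : (w + ε • v) j = w j + ε * v j := by simp
    rw [e, hwapp, hvapp]
    constructor
    · nlinarith [mul_nonneg hZ.1 (sub_nonneg.2 hY.2), hY.1,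
        mul_nonneg (mul_nonneg hε0.le (sub_nonneg.2 hZ.2))
          (mul_nonneg (sub_nonneg.2 hY.2) hB.1)]
    · nlinarith [mul_nonneg (mul_nonneg (sub_nonneg.2 hY.2) (sub_nonneg.2 hZ.2))
          (by linarith : (0:ℝ) ≤ 1 - ε),
        mul_nonneg (mul_nonneg (mul_nonneg (sub_nonneg.2 hY.2) (sub_nonneg.2 hZ.2)) hε0.le)
          (sub_nonneg.2 hB.2)]
  -- descent step
  have hdes := descent hGrad hGcont hβ.le hsmooth hwbox hwvbox
  have hsm : ⟪G w, ε • v⟫_ℝ = ε * ⟪G w, v⟫_ℝ := real_inner_smul_right _ _ _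
  have hns : ‖ε • v‖^2 = ε^2 * ‖v‖^2 := by
    rw [norm_smul]
    simp [abs_of_nonneg hε0.le]
    ring
  -- optimality step
  have hopt2 := hopt p₂ hp₂
  have hBv : ⟪had (G w) (oneM (z i')), had (b (i'+1)) (oneM (y i'))⟫_ℝ = ⟪G w, v⟫_ℝ := by
    rw [PiLp.inner_apply, PiLp.inner_apply]
    refine Finset.sum_congr rfl (fun j _ => ?_)
    simp [had, oneM, hvapp]
    ring
  set d : Vec n := WithLp.toLp 2 (fun j => (1 - w j) * p₂ j : Fin n → ℝ) with hd
  have hdapp : ∀ j, d j = (1 - w j) * p₂ j := fun j => rfl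
  have hp₂box : inBox p₂ := hPbox _ hp₂
  have hPv : ⟪had (G w) (oneM (z i')), had p₂ (oneM (y i'))⟫_ℝ = ⟪G w, d⟫_ℝ := by
    rw [PiLp.inner_apply, PiLp.inner_apply]
    refine Finset.sum_congr rfl (fun j _ => ?_)
    simp [had, oneM, hdapp, hwapp]
    ring
  have hdpos : ∀ j, 0 ≤ d j := by
    intro j
    have h1 := hwbox j; have h2 := hp₂box j
    rw [hdapp]
    exact mul_nonneg (sub_nonneg.2 h1.2) h2.1
  have hwd : w + d = psum w p₂ := by
    ext j
    simp [psum, hdapp]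
    ring
  have hwdbox : inBox (w + d) := by
    intro j
    have h1 := hwbox j; have h2 := hp₂box j
    have e : (w + d) j = w j + (1 - w j) * p₂ j := by simp [hdapp]
    rw [e]
    constructor
    · nlinarith [mul_nonneg (sub_nonneg.2 h1.2) h2.1, h1.1]
    · nlinarith [mul_nonneg (sub_nonneg.2 h1.2) (sub_nonneg.2 h2.2)]
  have htan := below_tangent hDR hGrad hwbox hdpos hwdbox
  -- psum lower bound
  have hpl : (1-m)*(1-ε)^i' * F p₂ ≤ F (psum w p₂) := by
    have hq0 : (0:ℝ) ≤ (1-m)*(1-ε)^i' :=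
      mul_nonneg (by linarith) (pow_nonneg (by linarith) _)
    have hq1 : (1-m)*(1-ε)^i' ≤ 1 := by
      have h1 : (1-ε)^i' ≤ 1 := pow_le_one₀ (by linarith) (by linarith)
      nlinarith
    have := psum_lower hDR hGrad hF0 hwbox hp₂box
      (s := 1 - (1-m)*(1-ε)^i') (by linarith) (by linarith) ?_
    · calc (1-m)*(1-ε)^i' * F p₂ = (1 - (1 - (1-m)*(1-ε)^i')) * F p₂ := by ring
      _ ≤ F (psum w p₂) := this
    · intro j
      have := hprod j
      have e : (1 - y i' j) * (1 - z i' j) = 1 - w j := by rw [hwapp]; ring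
      rw [e] at this
      linarith
  -- diameter bound
  have hnvD : ‖v‖ ≤ D := by
    have hvleB : ∀ j, v j ≤ b (i'+1) j := by
      intro j
      have hY := hYbox j; have hZ := hZbox j; have hB := hBbox j
      rw [hvapp]
      nlinarith [mul_nonneg hB.1 hY.1,
        mul_nonneg hB.1 (mul_nonneg hZ.1 (sub_nonneg.2 hY.2))]
    have hvP : v ∈ P := hPdown v (b (i'+1)) hvpos hvleB hbP
    have h0P : (0 : Vec n) ∈ P := by
      refine hPdown 0 (b (i'+1)) (fun j => le_refl 0) (fun j => (hBbox j).1) hbP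
    have mem1 : y i' ∈ (Q + P) ∩ {x : Vec n | inBox x} := by
      constructor
      · have := Set.add_mem_add hYQ h0P
        simpa using this
      · exact hYbox
    have mem2 : y i' + v ∈ (Q + P) ∩ {x : Vec n | inBox x} := by
      constructor
      · exact Set.add_mem_add hYQ hvP
      · intro j
        have hY := hYbox j; have hZ := hZbox j; have hB := hBbox j
        have e : (y i' + v) j = y i' j + v j := by simp
        rw [e, hvapp]
        constructor
        · nlinarith [hY.1,
            mul_nonneg (sub_nonneg.2 hZ.2) (mul_nonneg (sub_nonneg.2 hY.2) hB.1)]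
        · nlinarith [mul_nonneg (sub_nonneg.2 hY.2) (sub_nonneg.2 hB.2),
            mul_nonneg (sub_nonneg.2 hY.2) (mul_nonneg hZ.1 hB.1)]
    have hbdd : Bornology.IsBounded ((Q + P) ∩ {x : Vec n | inBox x}) := by
      refine (Bornology.IsBounded.subset ?_ Set.inter_subset_right)
      rw [isBounded_iff_forall_norm_le]
      refine ⟨Real.sqrt n, fun x hx => ?_⟩
      rw [EuclideanSpace.norm_eq]
      refine Real.sqrt_le_sqrt ?_
      calc ∑ j, ‖x j‖^2 ≤ ∑ j : Fin n, 1 := by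
            refine Finset.sum_le_sum (fun j _ => ?_)
            have := hx j
            rw [Real.norm_eq_abs, sq_abs]
            nlinarith [this.1, this.2]
      _ = n := by simp
    have := Metric.dist_le_diam_of_mem hbdd mem2 mem1
    rw [dist_eq_norm] at this
    have e : y i' + v - y i' = v := by abel
    rw [e] at this
    rw [hD]
    exact this
  -- assemble
  rw [hwv]
  have hvD2 : ‖v‖^2 ≤ D^2 := by nlinarith [norm_nonneg v]
  have hchain : (1-m)*(1-ε)^i' * F p₂ - F w ≤ ⟪G w, v⟫_ℝ := by
    have h1 : F (psum w p₂) - F w ≤ ⟪G w, d⟫_ℝ := by rwa [hwd] at htan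
    have h2 : ⟪G w, d⟫_ℝ ≤ ⟪G w, v⟫_ℝ := by
      rw [← hBv, ← hPv]
      exact hopt2
    linarith
  have hmul : ε * ((1-m)*(1-ε)^i' * F p₂ - F w) ≤ ε * ⟪G w, v⟫_ℝ :=
    mul_le_mul_of_nonneg_left hchain hε0.le
  have hquad : β/2 * ‖ε • v‖^2 ≤ ε^2*β*D^2/2 := by
    rw [hns]
    nlinarith [mul_nonneg (mul_nonneg (sq_nonneg ε) hβ.le) (sub_nonneg.2 hvD2)]
  rw [hsm] at hdes
  linarith
end
end

section
/- There exists an absolute constant C > 0 with the following property. In the Algorithm 2 setting, write wⱼ = y⁽ʲ⁾⊛z⁽ʲ⁾. Then for every integer t_s/ε ≤ i ≤ 1/ε: F(wᵢ) ≥ (1−m)·(εi − t_s)·(1−ε)^{i−1}·F(p₂*) + (1−ε)^{i − t_s/ε}·F(w_{t_s/ε}) − (i − t_s/ε)·Cε²βD². -/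
open scoped InnerProductSpace
open Pointwise

noncomputable section

def restr {n : ℕ} (d : Vec n) (s : Finset (Fin n)) : Vec n := WithLp.toLp 2 (fun j => if j ∈ s then d j else 0)

namespace S17

variable {n : ℕ}

lemma restr_apply (d : Vec n) (s : Finset (Fin n)) (j : Fin n) :
    restr d s j = if j ∈ s then d j else 0 := rfl

lemma vec_apply_add (x y : Vec n) (j : Fin n) : (x + y) j = x j + y j := rfl
lemma vec_apply_smul (c : ℝ) (x : Vec n) (j : Fin n) : (c • x) j = c * x j := rfl

lemma inner_eq (x y : Vec n) : ⟪x, y⟫_ℝ = ∑ j, x j * y j := by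
  simp [PiLp.inner_apply]
  exact Finset.sum_congr rfl (fun _ _ => mul_comm _ _)

lemma box_convex : Convex ℝ {x : Vec n | inBox x} := by
  intro x hx y hy s t hs ht hst j
  have h1 := hx j; have h2 := hy j
  simp only [vec_apply_add, vec_apply_smul]
  constructor
  · nlinarith [h1.1, h2.1]
  · nlinarith [h1.2, h2.2]

lemma norm_le_norm {x y : Vec n} (h : ∀ j, |x j| ≤ |y j|) : ‖x‖ ≤ ‖y‖ := by
  rw [EuclideanSpace.norm_eq, EuclideanSpace.norm_eq]
  simp only [Real.norm_eq_abs]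
  apply Real.sqrt_le_sqrt
  apply Finset.sum_le_sum
  intro j _
  have := h j
  have := abs_nonneg (x j)
  nlinarith

lemma isBounded_box : Bornology.IsBounded {x : Vec n | inBox x} := by
  apply (Metric.isBounded_closedBall (x := (0 : Vec n)) (r := Real.sqrt n)).subset
  intro x hx
  simp only [Metric.mem_closedBall, dist_zero_right]
  rw [EuclideanSpace.norm_eq]
  have : ∑ j, ‖x j‖ ^ 2 ≤ (n : ℝ) := by
    calc ∑ j, ‖x j‖ ^ 2 ≤ ∑ _j : Fin n, (1:ℝ) := by
          apply Finset.sum_le_sum; intro j _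
          have := (hx j).1; have := (hx j).2
          rw [Real.norm_eq_abs, sq_abs]; nlinarith
      _ = n := by simp
  exact Real.sqrt_le_sqrt this

/-- Linearization bound from smoothness. -/
lemma lin {F : Vec n → ℝ} {G : Vec n → Vec n} {β : ℝ}
    (hGrad : ∀ x, inBox x → HasGradientAt F (G x) x)
    (hsmooth : ∀ u v : Vec n, inBox u → inBox v → ‖G u - G v‖ ≤ β * ‖u - v‖)
    {u v : Vec n} (hu : inBox u) (hv : inBox v) :
    |F v - F u - ⟪G u, v - u⟫_ℝ| ≤ β * ‖v - u‖ ^ 2 := by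
  set s := segment ℝ u v with hs
  have hsub : s ⊆ {x : Vec n | inBox x} := (box_convex).segment_subset hu hv
  set φ : Vec n → (Vec n →L[ℝ] ℝ) := fun x => (InnerProductSpace.toDual ℝ (Vec n)) (G x) with hφ
  have hf : ∀ x ∈ s, HasFDerivWithinAt F (φ x) s x := fun x hx =>
    ((hGrad x (hsub hx)).hasFDerivAt).hasFDerivWithinAt
  have bound : ∀ x ∈ s, ‖φ x - φ u‖ ≤ β * ‖v - u‖ := by
    intro x hx
    have : ‖φ x - φ u‖ = ‖G x - G u‖ := by
      rw [hφ]; rw [← map_sub]; exact (InnerProductSpace.toDual ℝ (Vec n)).norm_map _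
    rw [this]
    refine le_trans (hsmooth x u (hsub hx) hu) ?_
    obtain ⟨a, c, ha, hc, hac, rfl⟩ := hx
    have hxu : a • u + c • v - u = c • (v - u) := by
      have : a = 1 - c := by linarith
      rw [this]; module
    rw [hxu, norm_smul]
    have hβ0 : 0 ≤ β * ‖v - u‖ := by
      by_cases hvu : v = u
      · simp [hvu]
      · have h2 := hsmooth u u hu hu
        simp at h2
        have : (0:ℝ) ≤ β := by
          by_contra hneg
          push_neg at hneg
          have := hsmooth v u hv hu
          nlinarith [norm_nonneg (G v - G u), norm_pos_iff.mpr (sub_ne_zero.mpr hvu)]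
        positivity
    have : ‖c‖ ≤ 1 := by simp [Real.norm_eq_abs, abs_of_nonneg hc]; linarith
    nlinarith [norm_nonneg (v - u)]
  have key := Convex.norm_image_sub_le_of_norm_hasFDerivWithin_le' hf bound
    (convex_segment u v) (left_mem_segment ℝ u v) (right_mem_segment ℝ u v)
  have hφu : φ u (v - u) = ⟪G u, v - u⟫_ℝ := InnerProductSpace.toDual_apply_apply ..
  rw [hφu] at key
  calc |F v - F u - ⟪G u, v - u⟫_ℝ| ≤ β * ‖v - u‖ * ‖v - u‖ := key
    _ = β * ‖v - u‖ ^ 2 := by ring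
/-- DR-submodularity along a nonnegative direction. -/
lemma dirDR {F : Vec n → ℝ} (hDR : DRSubmodular F) {x y d : Vec n}
    (hx : ∀ j, 0 ≤ x j) (hxy : ∀ j, x j ≤ y j) (hd : ∀ j, 0 ≤ d j)
    (hyd : ∀ j, y j + d j ≤ 1) :
    F (y + d) - F y ≤ F (x + d) - F x := by
  classical
  have key : ∀ s : Finset (Fin n),
      F (y + restr d s) - F y ≤ F (x + restr d s) - F x := by
    intro s
    induction s using Finset.induction_on with
    | empty =>
      have h0 : restr d (∅ : Finset (Fin n)) = 0 := by
        ext j; rw [restr_apply]; simp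
      rw [h0, add_zero, add_zero]
      simp
    | @insert j s hj ih =>
      have hdsle : ∀ l, 0 ≤ restr d s l ∧ restr d s l ≤ d l := by
        intro l; rw [restr_apply]; by_cases h : l ∈ s <;> simp [h, hd l]
      have hsplit : restr d (insert j s) = restr d s + EuclideanSpace.single j (d j) := by
        ext l
        simp only [vec_apply_add, restr_apply, EuclideanSpace.single_apply, Finset.mem_insert]
        by_cases h1 : l = j
        · subst h1; simp [hj]
        · simp [h1]
      rw [hsplit, ← add_assoc, ← add_assoc]
      have step : F ((y + restr d s) + EuclideanSpace.single j (d j)) - F (y + restr d s)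
          ≤ F ((x + restr d s) + EuclideanSpace.single j (d j)) - F (x + restr d s) := by
        rcases (hd j).lt_or_eq with hdj | hdj
        · apply hDR (x + restr d s) (y + restr d s) ?_ ?_ ?_ (d j) hdj j ?_
          · intro l
            simp only [vec_apply_add]
            exact ⟨by nlinarith [(hdsle l).1, hx l],
              by nlinarith [(hdsle l).2, hxy l, hyd l, hd l]⟩
          · intro l
            simp only [vec_apply_add]
            exact ⟨by nlinarith [(hdsle l).1, hx l, hxy l],
              by nlinarith [(hdsle l).2, hyd l, hd l]⟩
          · intro l; simp only [vec_apply_add]; linarith [hxy l]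
          · intro l
            simp only [vec_apply_add, EuclideanSpace.single_apply]
            by_cases h1 : l = j
            · subst h1
              have h2 : restr d s l = 0 := by rw [restr_apply]; simp [hj]
              simp only [eq_self_iff_true, if_true, h2]
              exact ⟨by nlinarith [hx l, hxy l, hd l], by nlinarith [hyd l, hx l, hxy l]⟩
            · simp only [if_neg h1, add_zero]
              exact ⟨by nlinarith [(hdsle l).1, hx l, hxy l],
                by nlinarith [(hdsle l).2, hyd l, hd l]⟩
        · have h0 : EuclideanSpace.single j (d j) = 0 := by
            rw [← hdj]; ext l; simp [EuclideanSpace.single_apply]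
          rw [h0, add_zero]
          simp
      linarith
  have huniv : restr d (Finset.univ : Finset (Fin n)) = d := by
    ext l; rw [restr_apply]; simp
  have := key Finset.univ
  rwa [huniv] at this

/-- Gradient upper-bounds marginal gains along nonnegative directions. -/
lemma L1 {F : Vec n → ℝ} {G : Vec n → Vec n} {β : ℝ}
    (hDR : DRSubmodular F)
    (hGrad : ∀ x, inBox x → HasGradientAt F (G x) x)
    (hsmooth : ∀ u v : Vec n, inBox u → inBox v → ‖G u - G v‖ ≤ β * ‖u - v‖)
    (hβ : 0 ≤ β)
    {x d : Vec n} (hx : inBox x) (hd : ∀ j, 0 ≤ d j) (hxd : ∀ j, x j + d j ≤ 1) :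
    F (x + d) - F x ≤ ⟪G x, d⟫_ℝ := by
  have main : ∀ M : ℕ, 1 ≤ M → F (x + d) - F x ≤ ⟪G x, d⟫_ℝ + β * ‖d‖^2 / M := by
    intro M hM
    have hM0 : (0:ℝ) < M := by exact_mod_cast hM
    have hbox : ∀ c : ℝ, 0 ≤ c → c ≤ 1 → inBox (x + c • d) := by
      intro c h0 h1 j
      simp only [vec_apply_add, vec_apply_smul]
      exact ⟨by nlinarith [(hx j).1, hd j], by nlinarith [hd j, hxd j]⟩
    have tele : ∀ l : ℕ, l ≤ M →
        F (x + ((l : ℝ)/M) • d) - F x ≤ l * (F (x + (M:ℝ)⁻¹ • d) - F x) := by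
      intro l hl
      induction l with
      | zero => simp
      | succ l ih =>
        have hlM : l ≤ M := Nat.le_of_succ_le hl
        have ihl := ih hlM
        have hl1M : ((l:ℝ) + 1) ≤ M := by exact_mod_cast hl
        have hstep : F ((x + ((l : ℝ)/M) • d) + (M:ℝ)⁻¹ • d) - F (x + ((l : ℝ)/M) • d)
            ≤ F (x + (M:ℝ)⁻¹ • d) - F x := by
          apply dirDR hDR (fun j => (hx j).1) ?_ ?_ ?_
          · intro j
            simp only [vec_apply_add, vec_apply_smul]
            have h0 : (0:ℝ) ≤ (l:ℝ)/M := by positivity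
            nlinarith [mul_nonneg h0 (hd j)]
          · intro j
            simp only [vec_apply_smul]
            exact mul_nonneg (by positivity) (hd j)
          · intro j
            simp only [vec_apply_add, vec_apply_smul]
            have hcle : ((l:ℝ)/M + (M:ℝ)⁻¹) ≤ 1 := by
              rw [inv_eq_one_div, ← add_div, div_le_one hM0]; linarith
            have h2 := mul_le_mul_of_nonneg_right hcle (hd j)
            nlinarith [hxd j]
        have hcomb : x + ((l : ℝ)/M) • d + (M:ℝ)⁻¹ • d = x + (((l : ℝ)+1)/M) • d := by
          rw [add_assoc, ← add_smul]
          congr 2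
          field_simp
        rw [hcomb] at hstep
        push_cast
        linarith
    have final := tele M le_rfl
    rw [div_self (ne_of_gt hM0), one_smul] at final
    have hlin := lin hGrad hsmooth hx (hbox (M:ℝ)⁻¹ (by positivity) (by
      rw [inv_le_one_iff₀]; right; exact_mod_cast hM))
    rw [add_sub_cancel_left] at hlin
    have h1 : F (x + (M:ℝ)⁻¹ • d) - F x ≤ ⟪G x, (M:ℝ)⁻¹ • d⟫_ℝ + β * ‖(M:ℝ)⁻¹ • d‖^2 :=
      by have := abs_le.mp hlin; linarith [this.2]
    rw [real_inner_smul_right, norm_smul] at h1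
    simp only [Real.norm_eq_abs, abs_of_pos (inv_pos.mpr hM0)] at h1
    calc F (x + d) - F x ≤ M * (F (x + (M:ℝ)⁻¹ • d) - F x) := final
      _ ≤ M * ((M:ℝ)⁻¹ * ⟪G x, d⟫_ℝ + β * ((M:ℝ)⁻¹ * ‖d‖)^2) := by
          apply mul_le_mul_of_nonneg_left _ (le_of_lt hM0)
          convert h1 using 2
      _ = ⟪G x, d⟫_ℝ + β * ‖d‖^2 / M := by field_simp
  apply le_of_forall_pos_le_add
  intro η hη
  obtain ⟨M, hMgt⟩ := exists_nat_gt (β * ‖d‖^2 / η)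
  have hM1 : 1 ≤ M + 1 := Nat.le_add_left 1 M
  have hMain := main (M+1) hM1
  have hM0 : (0:ℝ) < (M+1 : ℕ) := by exact_mod_cast hM1
  have hlt : β * ‖d‖^2 / ((M+1 : ℕ) : ℝ) ≤ η := by
    rw [div_le_iff₀ hM0]
    have h2 : β * ‖d‖^2 < ((M:ℝ)) * η := (div_lt_iff₀ hη).mp hMgt
    have : ((M:ℝ)) * η ≤ ((M+1:ℕ):ℝ) * η := by
      apply mul_le_mul_of_nonneg_right _ (le_of_lt hη)
      push_cast; linarith
    linarith
  linarith

/-- Gradient at the far end lower-bounds marginal gains along nonnegative directions. -/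
lemma L2 {F : Vec n → ℝ} {G : Vec n → Vec n} {β : ℝ}
    (hDR : DRSubmodular F)
    (hGrad : ∀ x, inBox x → HasGradientAt F (G x) x)
    (hsmooth : ∀ u v : Vec n, inBox u → inBox v → ‖G u - G v‖ ≤ β * ‖u - v‖)
    (hβ : 0 ≤ β)
    {x d : Vec n} (hx : inBox x) (hd : ∀ j, 0 ≤ d j) (hxd : ∀ j, x j + d j ≤ 1) :
    ⟪G (x + d), d⟫_ℝ ≤ F (x + d) - F x := by
  have main : ∀ M : ℕ, 1 ≤ M → ⟪G (x + d), d⟫_ℝ - β * ‖d‖^2 / M ≤ F (x + d) - F x := by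
    intro M hM
    have hM0 : (0:ℝ) < M := by exact_mod_cast hM
    have hbox : ∀ c : ℝ, 0 ≤ c → c ≤ 1 → inBox (x + c • d) := by
      intro c h0 h1 j
      simp only [vec_apply_add, vec_apply_smul]
      exact ⟨by nlinarith [(hx j).1, hd j], by nlinarith [hd j, hxd j]⟩
    have tele : ∀ l : ℕ, l ≤ M →
        (l : ℝ) * (F (x + d) - F (x + (((M:ℝ)-1)/M) • d))
          ≤ F (x + d) - F (x + (((M:ℝ)-(l:ℝ))/M) • d) := by
      intro l hl
      induction l with
      | zero =>
        simp only [Nat.cast_zero, sub_zero, zero_mul, div_self (ne_of_gt hM0), one_smul]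
        linarith
      | succ l ih =>
        have hlM : l ≤ M := Nat.le_of_succ_le hl
        have ihl := ih hlM
        have hl1M : ((l:ℝ) + 1) ≤ M := by exact_mod_cast hl
        have hl0 : (0:ℝ) ≤ l := Nat.cast_nonneg l
        have hc1 : (0:ℝ) ≤ ((M:ℝ)-((l:ℝ)+1))/M := div_nonneg (by linarith) (le_of_lt hM0)
        have hc2 : ((M:ℝ)-((l:ℝ)+1))/M ≤ ((M:ℝ)-1)/M :=
          (div_le_div_iff_of_pos_right hM0).mpr (by linarith)
        have hstep := dirDR hDR (x := x + (((M:ℝ)-((l:ℝ)+1))/M) • d)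
            (y := x + (((M:ℝ)-1)/M) • d) (d := (M:ℝ)⁻¹ • d) ?_ ?_ ?_ ?_
        · have he1 : x + (((M:ℝ)-1)/M) • d + (M:ℝ)⁻¹ • d = x + d := by
            rw [add_assoc, ← add_smul]
            have : ((M:ℝ)-1)/M + (M:ℝ)⁻¹ = 1 := by field_simp; ring
            rw [this, one_smul]
          have he2 : x + (((M:ℝ)-((l:ℝ)+1))/M) • d + (M:ℝ)⁻¹ • d
              = x + (((M:ℝ)-(l:ℝ))/M) • d := by
            rw [add_assoc, ← add_smul]
            congr 2
            field_simp
            ring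
          rw [he1, he2] at hstep
          push_cast
          nlinarith
        · intro j
          simp only [vec_apply_add, vec_apply_smul]
          nlinarith [(hx j).1, mul_nonneg hc1 (hd j)]
        · intro j
          simp only [vec_apply_add, vec_apply_smul]
          nlinarith [mul_le_mul_of_nonneg_right hc2 (hd j)]
        · intro j
          simp only [vec_apply_smul]
          exact mul_nonneg (by positivity) (hd j)
        · intro j
          simp only [vec_apply_add, vec_apply_smul]
          have heq : ((M:ℝ)-1)/M + (M:ℝ)⁻¹ = 1 := by field_simp; ring
          have h2 : (((M:ℝ)-1)/M) * d j + (M:ℝ)⁻¹ * d j = d j := by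
            rw [← add_mul, heq, one_mul]
          linarith [hxd j]
    have final := tele M le_rfl
    rw [sub_self, zero_div, zero_smul, add_zero] at final
    have hxd' : inBox (x + d) := by
      have := hbox 1 zero_le_one le_rfl
      rwa [one_smul] at this
    have hM1' : (1:ℝ) ≤ (M:ℝ) := by exact_mod_cast hM
    have hvbox : inBox (x + (((M:ℝ)-1)/M) • d) :=
      hbox _ (div_nonneg (by linarith) (le_of_lt hM0)) (by rw [div_le_one hM0]; linarith)
    have hlin := lin hGrad hsmooth hxd' hvbox
    have hvu : x + (((M:ℝ)-1)/M) • d - (x + d) = (((M:ℝ)-1)/M - 1) • d := by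
      module
    have hcoef : ((M:ℝ)-1)/M - 1 = -(M:ℝ)⁻¹ := by field_simp; ring
    rw [hvu, hcoef, real_inner_smul_right, norm_smul] at hlin
    simp only [Real.norm_eq_abs, abs_neg, abs_of_pos (inv_pos.mpr hM0)] at hlin
    have h1 := (abs_le.mp hlin).2
    -- h1 : F v - F (x+d) - (-(M⁻¹) * ⟪G (x+d), d⟫) ≤ β * ((M⁻¹) * ‖d‖)^2
    have h2 : (M:ℝ)⁻¹ * ⟪G (x + d), d⟫_ℝ - β * ((M:ℝ)⁻¹ * ‖d‖)^2
        ≤ F (x + d) - F (x + (((M:ℝ)-1)/M) • d) := by linarith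
    have h3 := mul_le_mul_of_nonneg_left h2 (le_of_lt hM0)
    calc ⟪G (x + d), d⟫_ℝ - β * ‖d‖^2 / M
        = (M:ℝ) * ((M:ℝ)⁻¹ * ⟪G (x + d), d⟫_ℝ - β * ((M:ℝ)⁻¹ * ‖d‖)^2) := by field_simp
      _ ≤ (M:ℝ) * (F (x + d) - F (x + (((M:ℝ)-1)/M) • d)) := h3
      _ ≤ F (x + d) - F x := final
  apply le_of_forall_pos_le_add
  intro η hη
  obtain ⟨M, hMgt⟩ := exists_nat_gt (β * ‖d‖^2 / η)
  have hM1 : 1 ≤ M + 1 := Nat.le_add_left 1 M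
  have hMain := main (M+1) hM1
  have hM0 : (0:ℝ) < (M+1 : ℕ) := by exact_mod_cast hM1
  have hlt : β * ‖d‖^2 / ((M+1 : ℕ) : ℝ) ≤ η := by
    rw [div_le_iff₀ hM0]
    have h2 : β * ‖d‖^2 < ((M:ℝ)) * η := (div_lt_iff₀ hη).mp hMgt
    have : ((M:ℝ)) * η ≤ ((M+1:ℕ):ℝ) * η := by
      apply mul_le_mul_of_nonneg_right _ (le_of_lt hη)
      push_cast; linarith
    linarith
  linarith

/-- Key ratio bound: `F(x ⊛ p) ≥ (1-c)·F(p)` when all coordinates of `x` are at most `c`. -/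
lemma psum_lb {F : Vec n → ℝ} {G : Vec n → Vec n} {β : ℝ}
    (hF0 : ∀ x, inBox x → 0 ≤ F x)
    (hDR : DRSubmodular F)
    (hGrad : ∀ x, inBox x → HasGradientAt F (G x) x)
    (hsmooth : ∀ u v : Vec n, inBox u → inBox v → ‖G u - G v‖ ≤ β * ‖u - v‖)
    (hβ : 0 ≤ β)
    {x p : Vec n} {c : ℝ} (hx : inBox x) (hp : inBox p)
    (hc0 : 0 ≤ c) (hc1 : c < 1) (hxc : ∀ j, x j ≤ c) :
    (1 - c) * F p ≤ F (psum x p) := by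
  have hA : psum x p = p + had x (oneM p) := by
    ext j; simp only [psum, had, oneM, vec_apply_add]; ring
  rcases eq_or_lt_of_le hc0 with hc | hc
  · -- c = 0 : x = 0
    have hx0 : ∀ j, x j = 0 := by
      intro j
      have h1 := hxc j
      rw [← hc] at h1
      exact le_antisymm h1 (hx j).1
    have : psum x p = p := by ext j; simp only [psum, hx0 j]; ring
    rw [this, ← hc]; linarith [hF0 p hp]
  · set d1 : Vec n := had x (oneM p) with hd1
    have hd1nn : ∀ j, 0 ≤ d1 j := by
      intro j; simp only [hd1, had, oneM]
      exact mul_nonneg (hx j).1 (by linarith [(hp j).2])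
    have hd1le : ∀ j, p j + d1 j ≤ 1 := by
      intro j; simp only [hd1, had, oneM]
      nlinarith [(hx j).2, (hp j).2, (hp j).1]
    have hL2 := L2 hDR hGrad hsmooth hβ hp hd1nn hd1le
    -- B := (p + d1) + d2 with d2 = (1/c - 1)•d1
    set d2 : Vec n := (1/c - 1) • d1 with hd2
    have hfac : 0 ≤ 1/c - 1 := by
      rw [le_sub_iff_add_le, zero_add, le_div_iff₀ hc]; linarith
    have hd2nn : ∀ j, 0 ≤ d2 j := by
      intro j; simp only [hd2, vec_apply_smul]
      exact mul_nonneg hfac (hd1nn j)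
    have hAbox : inBox (p + d1) := by
      intro j
      simp only [vec_apply_add]
      exact ⟨by linarith [(hp j).1, hd1nn j], hd1le j⟩
    have hABle : ∀ j, (p + d1) j + d2 j ≤ 1 := by
      intro j
      simp only [vec_apply_add, hd2, vec_apply_smul, hd1, had, oneM]
      have hxj := hxc j
      have h1 : (1 + (1/c - 1)) * (x j * (1 - p j)) ≤ 1 * (1 - p j) := by
        have : (1 + (1/c - 1)) = 1/c := by ring
        rw [this, one_mul]
        rw [div_mul_eq_mul_div, div_le_iff₀ hc]
        nlinarith [(hp j).2]
      nlinarith [(hp j).2]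
    have hL1 := L1 hDR hGrad hsmooth hβ hAbox hd2nn hABle
    rw [hd2, real_inner_smul_right] at hL1
    have hBbox : inBox (p + d1 + d2) := by
      intro j
      constructor
      · simp only [vec_apply_add]
        linarith [(hp j).1, hd1nn j, hd2nn j]
      · exact hABle j
    have hFB := hF0 _ hBbox
    have hFA := hF0 _ hAbox
    -- combine
    set I := ⟪G (p + d1), d1⟫_ℝ with hI
    have k1 : I ≤ F (p + d1) - F p := hL2
    have k2 : F (p + d1 + d2) - F (p + d1) ≤ (1/c - 1) * I := hL1
    have k3 : c * (F (p + d1 + d2) - F (p + d1)) ≤ (1 - c) * I := by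
      have := mul_le_mul_of_nonneg_left k2 (le_of_lt hc)
      calc c * (F (p + d1 + d2) - F (p + d1)) ≤ c * ((1/c - 1) * I) := this
        _ = (1 - c) * I := by field_simp
    rw [hA]
    nlinarith [mul_le_mul_of_nonneg_left k1 (sub_nonneg.mpr (le_of_lt hc1))]

lemma inBox_psum {x y : Vec n} (hx : inBox x) (hy : inBox y) : inBox (psum x y) := by
  intro j
  have h1 := hx j; have h2 := hy j
  constructor
  · show 0 ≤ x j + y j - x j * y j
    nlinarith
  · show x j + y j - x j * y j ≤ 1
    nlinarith

lemma coord1 {ε u v α bb : ℝ} (hε0 : 0 ≤ ε) (hε1 : ε ≤ 1)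
    (hu0 : 0 ≤ u) (hu1 : u ≤ 1) (hv0 : 0 ≤ v) (hv1 : v ≤ 1)
    (hα : 0 ≤ α) (hb0 : 0 ≤ bb) (hab : α + bb ≤ 1) :
    (1-ε) * ((1-u)*(1-v)) ≤ (1 - ((1-ε)*u + ε*α)) * (1 - (v + ε*(1-v)*bb)) := by
  have h1 : 1 - ((1-ε)*u + ε*α) = (1-ε)*(1-u) + ε*(1-α) := by ring
  have h2 : 1 - (v + ε*(1-v)*bb) = (1-v)*(1-ε*bb) := by ring
  rw [h1, h2]
  have hb1 : bb ≤ 1 := by linarith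
  have key : (1-ε) * (1-u) ≤ ((1-ε)*(1-u) + ε*(1-α)) * (1 - ε*bb) := by
    have f1 : bb ≤ 1 - α := by linarith
    have f2 : (1-ε)*(1-u) ≤ 1 - ε*bb := by nlinarith
    have f3 : bb * ((1-ε)*(1-u)) ≤ (1-α) * (1 - ε*bb) := by
      have g1 : bb * ((1-ε)*(1-u)) ≤ bb * (1 - ε*bb) :=
        mul_le_mul_of_nonneg_left f2 hb0
      have hpos : (0:ℝ) ≤ 1 - ε*bb := by nlinarith
      have g2 : bb * (1 - ε*bb) ≤ (1-α) * (1 - ε*bb) :=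
        mul_le_mul_of_nonneg_right f1 hpos
      linarith
    have f4 := mul_le_mul_of_nonneg_left f3 hε0
    nlinarith [f4]
  have hv' : 0 ≤ 1 - v := by linarith
  calc (1-ε) * ((1-u)*(1-v)) = ((1-ε) * (1-u)) * (1-v) := by ring
    _ ≤ (((1-ε)*(1-u) + ε*(1-α)) * (1 - ε*bb)) * (1-v) :=
        mul_le_mul_of_nonneg_right key hv'
    _ = ((1-ε)*(1-u) + ε*(1-α)) * ((1-v)*(1 - ε*bb)) := by ring

end S17

set_option maxHeartbeats 2000000 in
/-- Lemma 4.19 / `lem:bound2GF`: there is an absolute constant `C > 0`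
such that, in the Algorithm 2 setting, with `wⱼ = y⁽ʲ⁾ ⊛ z⁽ʲ⁾`, for every integer
`t_s/ε ≤ i ≤ 1/ε`:
`F(wᵢ) ≥ (1−m)(εi − t_s)(1−ε)^{i−1}·F(p₂*) + (1−ε)^{i − t_s/ε}·F(w_{t_s/ε})
  − (i − t_s/ε)·Cε²βD²`. -/
theorem stmt_17 : ∃ C : ℝ, 0 < C ∧
    ∀ (n : ℕ) (Q P : Set (Vec n)) (F : Vec n → ℝ) (G : Vec n → Vec n)
      (β ts ε : ℝ) (k N : ℕ) (y z a b : ℕ → Vec n),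
    Alg2Setting Q P F G β ts ε k N y z a b →
    ∀ q p o p₂ : Vec n, q ∈ Q → p ∈ P → (∀ j, q j + p j ≤ 1) → o = q + p → p₂ ∈ P →
    ∀ m D : ℝ, m = normInf (y 0) →
    D = Metric.diam ((Q + P) ∩ {x : Vec n | inBox x}) →
    ∀ i, k ≤ i → i ≤ N →
      (1 - m) * (ε*i - ts) * (1 - ε)^((i : ℤ) - 1) * F p₂
        + (1 - ε)^(i - k) * F (psum (y k) (z k))
        - ((i : ℝ) - (k : ℝ)) * C * ε^2 * β * D^2
      ≤ F (psum (y i) (z i)) := by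
  refine ⟨1, one_pos, ?_⟩
  intro n Q P F G β ts ε k N y z a b S q p o p₂ hq hp hqp ho hp₂ m D hm hD
  have hε0 : 0 < ε := S.hε0
  have hε1 : ε < 1 := lt_of_le_of_lt S.hε30 (by norm_num)
  have hβ0 : 0 ≤ β := le_of_lt S.hβ
  have hm0 : 0 ≤ m := by
    rw [hm]
    show (0:ℝ) ≤ ⨆ j, |y 0 j|
    exact Real.iSup_nonneg (fun j => abs_nonneg _)
  have hm1 : m < 1 := by rw [hm]; exact S.hm1
  have hy0m : ∀ j, y 0 j ≤ m := by
    intro j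
    rw [hm]
    show y 0 j ≤ ⨆ j, |y 0 j|
    exact le_trans (le_abs_self _)
      (le_ciSup (Set.Finite.bddAbove (Set.finite_range (fun j => |y 0 j|))) j)
  have hp₂B : inBox p₂ := S.hPbox _ hp₂
  have hFp₂ : 0 ≤ F p₂ := S.hF0 _ hp₂B
  -- The basic invariant carried along the iterations.
  have inv : ∀ i, i ≤ N → (y i ∈ Q ∧ inBox (z i) ∧
      ∀ j, (1-m)*(1-ε)^i ≤ (1 - y i j) * (1 - z i j)) := by
    intro i
    induction i with
    | zero =>
      intro _
      have h0 : ∀ j : Fin n, (0 : Vec n) j = 0 := fun _ => rfl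
      refine ⟨S.hy0Q, ?_, ?_⟩
      · rw [S.hz0]
        intro j
        rw [h0 j]
        exact ⟨le_rfl, zero_le_one⟩
      · intro j
        rw [S.hz0, h0 j, pow_zero, mul_one]
        have := hy0m j
        nlinarith
    | succ i ih =>
      intro hiN1
      have hiN' : i ≤ N := Nat.le_of_succ_le hiN1
      obtain ⟨hyQ, hzB, hprod⟩ := ih hiN'
      have hyB : inBox (y i) := S.hQbox _ hyQ
      have hyr := S.hyrec (i+1) (Nat.le_add_left 1 i) hiN1
      have hzr := S.hzrec (i+1) (Nat.le_add_left 1 i) hiN1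
      rw [Nat.add_sub_cancel] at hyr hzr
      have hz1 : ∀ j, z (i+1) j = z i j + ε * (1 - z i j) * b (i+1) j := by
        intro j
        rw [hzr]
        show z i j + ε * ((1 - z i j) * b (i+1) j) = _
        ring
      by_cases hik : i + 1 ≤ k
      · obtain ⟨haQ, hbP, hab, _⟩ := S.hphase1 (i+1) (Nat.le_add_left 1 i) hik
        have haB := S.hQbox _ haQ
        have hbB := S.hPbox _ hbP
        have hyQ' : y (i+1) ∈ Q := by
          rw [hyr]
          exact S.hQconv hyQ haQ (by linarith) (le_of_lt hε0) (by ring)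
        have hy1 : ∀ j, y (i+1) j = (1-ε) * y i j + ε * a (i+1) j := by
          intro j; rw [hyr]; rfl
        refine ⟨hyQ', ?_, ?_⟩
        · intro j
          have h1 := hzB j; have h2 := hbB j
          rw [hz1 j]
          have t1 : 0 ≤ ε*(1 - z i j)*b (i+1) j :=
            mul_nonneg (mul_nonneg (le_of_lt hε0) (by linarith [h1.2])) h2.1
          have t2 : 0 ≤ (1 - z i j)*(1 - ε*b (i+1) j) := by
            apply mul_nonneg (by linarith [h1.2])
            nlinarith [h2.2]
          exact ⟨by linarith [h1.1], by nlinarith [t2]⟩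
        · intro j
          rw [hz1 j, hy1 j]
          have hc := S17.coord1 (le_of_lt hε0) (le_of_lt hε1) (hyB j).1 (hyB j).2
            (hzB j).1 (hzB j).2 (haB j).1 (hbB j).1 (hab j).2
          calc (1-m)*(1-ε)^(i+1) = (1-ε) * ((1-m)*(1-ε)^i) := by ring
            _ ≤ (1-ε) * ((1 - y i j)*(1 - z i j)) :=
                mul_le_mul_of_nonneg_left (hprod j) (by linarith)
            _ ≤ _ := hc
      · push_neg at hik
        obtain ⟨hay, hbP, _⟩ := S.hphase2 (i+1) hik hiN1
        rw [Nat.add_sub_cancel] at hay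
        have hbB := S.hPbox _ hbP
        have hyy : y (i+1) = y i := by
          have h1 : (1-ε) + ε = 1 := by ring
          rw [hyr, hay, ← add_smul, h1, one_smul]
        refine ⟨by rw [hyy]; exact hyQ, ?_, ?_⟩
        · intro j
          have h1 := hzB j; have h2 := hbB j
          rw [hz1 j]
          have t1 : 0 ≤ ε*(1 - z i j)*b (i+1) j :=
            mul_nonneg (mul_nonneg (le_of_lt hε0) (by linarith [h1.2])) h2.1
          have t2 : 0 ≤ (1 - z i j)*(1 - ε*b (i+1) j) := by
            apply mul_nonneg (by linarith [h1.2])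
            nlinarith [h2.2]
          exact ⟨by linarith [h1.1], by nlinarith [t2]⟩
        · intro j
          rw [hz1 j, hyy]
          have h1 := hzB j; have h2 := hbB j; have h3 := hyB j
          have key : 0 ≤ ((1 - y i j) * (1 - z i j)) * (ε * (1 - b (i+1) j)) := by
            apply mul_nonneg (mul_nonneg (by linarith) (by linarith))
            apply mul_nonneg (le_of_lt hε0) (by linarith)
          calc (1-m)*(1-ε)^(i+1) = (1-ε) * ((1-m)*(1-ε)^i) := by ring
            _ ≤ (1-ε) * ((1 - y i j)*(1 - z i j)) :=
                mul_le_mul_of_nonneg_left (hprod j) (by linarith)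
            _ ≤ (1 - y i j) * (1 - (z i j + ε * (1 - z i j) * b (i+1) j)) := by linarith [key]
  -- `0 ∈ P`, boundedness and the diameter bound
  have h0P : (0 : Vec n) ∈ P :=
    S.hPdown 0 p (fun j => le_rfl) (fun j => (S.hPbox p hp j).1) hp
  have hbdd : Bornology.IsBounded ((Q + P) ∩ {x : Vec n | inBox x}) :=
    S17.isBounded_box.subset Set.inter_subset_right
  have hDb : ∀ u, u ∈ Q → ∀ v, v ∈ P → ‖had (oneM u) v‖ ≤ D := by
    intro u huQ v hvP
    have huB := S.hQbox _ huQ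
    have hvB := S.hPbox _ hvP
    have hwP : had (oneM u) v ∈ P := by
      apply S.hPdown _ v ?_ ?_ hvP
      · intro j
        show 0 ≤ (1 - u j) * v j
        exact mul_nonneg (by linarith [(huB j).2]) (hvB j).1
      · intro j
        show (1 - u j) * v j ≤ v j
        nlinarith [(huB j).1, (hvB j).1, (hvB j).2]
    have hmem1 : u + had (oneM u) v ∈ (Q + P) ∩ {x : Vec n | inBox x} := by
      refine ⟨Set.add_mem_add huQ hwP, ?_⟩
      show inBox (u + had (oneM u) v)
      intro j
      show 0 ≤ u j + (1 - u j) * v j ∧ u j + (1 - u j) * v j ≤ 1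
      constructor
      · nlinarith [(huB j).1, (huB j).2, (hvB j).1]
      · nlinarith [(huB j).2, (hvB j).2, (hvB j).1, (huB j).1]
    have hmem2 : u ∈ (Q + P) ∩ {x : Vec n | inBox x} := by
      refine ⟨?_, huB⟩
      have h2 := Set.add_mem_add huQ h0P
      rwa [add_zero] at h2
    have hdist := Metric.dist_le_diam_of_mem hbdd hmem1 hmem2
    rw [dist_eq_norm, add_sub_cancel_left] at hdist
    rw [hD]
    exact hdist
  have hDnn : 0 ≤ D := by rw [hD]; exact Metric.diam_nonneg
  -- the one-step inequality in phase 2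
  have step : ∀ i, k ≤ i → i + 1 ≤ N →
      (1-ε) * F (psum (y i) (z i)) + ε * ((1-m)*(1-ε)^i * F p₂) - β*ε^2*D^2
        ≤ F (psum (y (i+1)) (z (i+1))) := by
    intro i hki hiN1
    have hiN' : i ≤ N := Nat.le_of_succ_le hiN1
    obtain ⟨hyQ, hzB, hprod⟩ := inv i hiN'
    obtain ⟨_, hzB', _⟩ := inv (i+1) hiN1
    have hyB : inBox (y i) := S.hQbox _ hyQ
    obtain ⟨hay, hbP, hopt⟩ := S.hphase2 (i+1) (by omega) hiN1
    rw [Nat.add_sub_cancel] at hay hopt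
    have hbB := S.hPbox _ hbP
    have hyr := S.hyrec (i+1) (by omega) hiN1
    have hzr := S.hzrec (i+1) (by omega) hiN1
    rw [Nat.add_sub_cancel] at hyr hzr
    have hyy : y (i+1) = y i := by
      have h1 : (1-ε) + ε = 1 := by ring
      rw [hyr, hay, ← add_smul, h1, one_smul]
    set w : Vec n := psum (y i) (z i) with hw
    have hwB : inBox w := S17.inBox_psum hyB hzB
    have hwj : ∀ j, w j = y i j + z i j - y i j * z i j := fun j => rfl
    set δ : Vec n := ε • had (oneM w) (b (i+1)) with hδ
    have hδj : ∀ j, δ j = ε * ((1 - w j) * b (i+1) j) := fun j => rfl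
    have hw1 : psum (y i) (z (i+1)) = w + δ := by
      ext j
      have hzj : z (i+1) j = z i j + ε * ((1 - z i j) * b (i+1) j) := by rw [hzr]; rfl
      show y i j + z (i+1) j - y i j * z (i+1) j = w j + δ j
      rw [hzj, hδj j, hwj j]
      ring
    have hwB' : inBox (w + δ) := by rw [← hw1]; exact S17.inBox_psum hyB hzB'
    have hlin := S17.lin S.hGrad S.hsmooth hwB hwB'
    rw [add_sub_cancel_left] at hlin
    have hδD : ‖δ‖ ≤ ε * D := by
      rw [hδ, norm_smul, Real.norm_eq_abs, abs_of_pos hε0]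
      apply mul_le_mul_of_nonneg_left ?_ (le_of_lt hε0)
      refine le_trans (S17.norm_le_norm (x := had (oneM w) (b (i+1)))
        (y := had (oneM (y i)) (b (i+1))) ?_) (hDb _ hyQ _ hbP)
      intro j
      have h1 := hyB j; have h2 := hzB j; have h3 := hbB j
      show |(1 - w j) * b (i+1) j| ≤ |(1 - y i j) * b (i+1) j|
      have g1 : (0:ℝ) ≤ 1 - y i j := by linarith [h1.2]
      have g2 : (0:ℝ) ≤ 1 - z i j := by linarith [h2.2]
      have g3 := mul_nonneg (mul_nonneg g1 g2) h3.1
      have g4 := mul_nonneg g1 h3.1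
      have g5 := mul_nonneg (mul_nonneg g1 h3.1) h2.1
      rw [hwj j, abs_of_nonneg (by nlinarith [g3]), abs_of_nonneg g4]
      nlinarith [g5]
    have hnorm2 : β * ‖δ‖^2 ≤ β * ε^2 * D^2 := by
      have h2 : ‖δ‖^2 ≤ (ε*D)^2 := pow_le_pow_left₀ (norm_nonneg _) hδD 2
      nlinarith
    have hin1 : ⟪G w, δ⟫_ℝ = ε * ⟪had (G w) (oneM (z i)), had (b (i+1)) (oneM (y i))⟫_ℝ := by
      rw [hδ, real_inner_smul_right]
      congr 1
      rw [S17.inner_eq, S17.inner_eq]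
      apply Finset.sum_congr rfl
      intro j _
      show G w j * ((1 - w j) * b (i+1) j) = (G w j * (1 - z i j)) * (b (i+1) j * (1 - y i j))
      rw [hwj j]; ring
    have hin2 : ⟪had (G w) (oneM (z i)), had p₂ (oneM (y i))⟫_ℝ
        = ⟪G w, had (oneM w) p₂⟫_ℝ := by
      rw [S17.inner_eq, S17.inner_eq]
      apply Finset.sum_congr rfl
      intro j _
      show (G w j * (1 - z i j)) * (p₂ j * (1 - y i j)) = G w j * ((1 - w j) * p₂ j)
      rw [hwj j]; ring
    have hoptp := hopt p₂ hp₂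
    have hd2nn : ∀ j, 0 ≤ had (oneM w) p₂ j := by
      intro j
      show 0 ≤ (1 - w j) * p₂ j
      exact mul_nonneg (by linarith [(hwB j).2]) (hp₂B j).1
    have hd2le : ∀ j, w j + had (oneM w) p₂ j ≤ 1 := by
      intro j
      show w j + (1 - w j) * p₂ j ≤ 1
      nlinarith [(hwB j).1, (hwB j).2, (hp₂B j).1, (hp₂B j).2]
    have hL1 := S17.L1 S.hDR S.hGrad S.hsmooth hβ0 hwB hd2nn hd2le
    have hps : w + had (oneM w) p₂ = psum w p₂ := by
      ext j
      show w j + (1 - w j) * p₂ j = w j + p₂ j - w j * p₂ j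
      ring
    rw [hps] at hL1
    have hpow0 : 0 < (1-m)*(1-ε)^i :=
      mul_pos (by linarith) (pow_pos (by linarith) i)
    have hpow1 : (1-m)*(1-ε)^i ≤ 1 := by
      have g1 : (1-ε)^i ≤ 1 := pow_le_one₀ (by linarith) (by linarith)
      nlinarith
    have hwc : ∀ j, w j ≤ 1 - (1-m)*(1-ε)^i := by
      intro j
      have h4 := hprod j
      have h5 : (1 - y i j) * (1 - z i j) = 1 - w j := by rw [hwj j]; ring
      rw [h5] at h4
      linarith
    have hratio := S17.psum_lb S.hF0 S.hDR S.hGrad S.hsmooth hβ0 hwB hp₂B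
      (by linarith : (0:ℝ) ≤ 1 - (1-m)*(1-ε)^i)
      (by linarith : 1 - (1-m)*(1-ε)^i < 1) hwc
    have hratio' : (1-m)*(1-ε)^i * F p₂ ≤ F (psum w p₂) := by
      have h3 : (1 - (1 - (1-m)*(1-ε)^i)) = (1-m)*(1-ε)^i := by ring
      rwa [h3] at hratio
    rw [hyy, hw1]
    have habs := (abs_le.mp hlin).1
    have hchain : ε * ((1-m)*(1-ε)^i * F p₂ - F w) ≤ ⟪G w, δ⟫_ℝ := by
      rw [hin1]
      have h4 : (1-m)*(1-ε)^i * F p₂ - F w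
          ≤ ⟪had (G w) (oneM (z i)), had (b (i+1)) (oneM (y i))⟫_ℝ := by
        have h5 : (1-m)*(1-ε)^i * F p₂ - F w ≤ F (psum w p₂) - F w := by linarith
        have h6 : F (psum w p₂) - F w ≤ ⟪had (G w) (oneM (z i)), had p₂ (oneM (y i))⟫_ℝ := by
          rw [hin2]; exact hL1
        linarith [hoptp]
      exact mul_le_mul_of_nonneg_left h4 (le_of_lt hε0)
    linarith [habs, hnorm2, hchain]
  -- the main induction
  intro i hki
  induction i, hki using Nat.le_induction with
  | base =>
    intro _
    have h1 : ε * (k:ℝ) - ts = 0 := by rw [← S.hk]; ring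
    have hLHS : (1-m) * (ε*(k:ℝ) - ts) * (1-ε)^((k:ℤ) - 1) * F p₂
        + (1-ε)^(k-k) * F (psum (y k) (z k))
        - ((k:ℝ)-(k:ℝ))*1*ε^2*β*D^2 = F (psum (y k) (z k)) := by
      rw [h1, Nat.sub_self]
      ring
    rw [hLHS]
  | succ i hki ih =>
    intro hiN1
    have hiN' : i ≤ N := by omega
    have IH := ih hiN'
    have hstep := step i hki hiN1
    have hne : (1-ε) ≠ 0 := ne_of_gt (by linarith)
    have e1 : ((i+1:ℕ):ℤ) - 1 = (i:ℕ) := by push_cast; ring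
    have e2 : (1-ε)^(((i+1:ℕ):ℤ) - 1) = (1-ε)^(i:ℕ) := by rw [e1, zpow_natCast]
    have e3 : (1-ε) * (1-ε)^((i:ℤ)-1) = (1-ε)^(i:ℕ) := by
      rw [zpow_sub₀ hne, zpow_natCast, zpow_one]
      field_simp
    have e4 : i+1-k = (i-k)+1 := by omega
    rw [e2, e4, pow_succ]
    have hik' : (0:ℝ) ≤ (i:ℝ) - (k:ℝ) := by
      have : (k:ℝ) ≤ (i:ℝ) := by exact_mod_cast hki
      linarith
    have hE : 0 ≤ ε^2*β*D^2 := by positivity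
    have IH' := mul_le_mul_of_nonneg_left IH (by linarith : (0:ℝ) ≤ 1-ε)
    have eq1 : (1-ε) * ((1-m)*(ε*(i:ℝ) - ts)*(1-ε)^((i:ℤ)-1)*F p₂
          + (1-ε)^(i-k)*F (psum (y k) (z k)) - ((i:ℝ)-(k:ℝ))*1*ε^2*β*D^2)
        = (1-m)*(ε*(i:ℝ) - ts)*(1-ε)^(i:ℕ)*F p₂
          + ((1-ε)^(i-k)*(1-ε))*F (psum (y k) (z k))
          - (1-ε)*((i:ℝ)-(k:ℝ))*ε^2*β*D^2 := by
      rw [← e3]; ring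
    rw [eq1] at IH'
    push_cast
    nlinarith [hstep, IH', mul_nonneg (mul_nonneg (le_of_lt hε0) hik') hE]
end
end

section
/- In the Algorithm 3 setting, for every integer 0 ≤ i ≤ 1/ε: y⁽ⁱ⁾ ∈ Q and z⁽ⁱ⁾ ∈ εi·P, where εi·P = {εi·x : x ∈ P}. Consequently, y⁽ⁱ⁾⊛z⁽ⁱ⁾ ∈ (Q + P) ∩ [0,1]^n, where Q + P = {u + v : u ∈ Q, v ∈ P}. -/
open scoped InnerProductSpace
open Pointwise

noncomputable section

/-- The Algorithm 3 setting (Algorithm with empirical improvements): `Q ⊆ [0,1]^n` convex,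
`P ⊆ [0,1]^n` down-closed convex, `ε ∈ (0,1)` with `1/ε = N ∈ ℕ`, and sequences
`y⁽ⁱ⁾, z⁽ⁱ⁾` built from `a⁽ⁱ⁾ ∈ Q`, `b⁽ⁱ⁾ ∈ P` and `0 ≤ c⁽ⁱ⁾ ≤ z⁽ⁱ⁻¹⁾`, via
`y⁽ⁱ⁾ = (1−ε)·y⁽ⁱ⁻¹⁾ + ε·a⁽ⁱ⁾` and `z⁽ⁱ⁾ = z⁽ⁱ⁻¹⁾ + ε·(b⁽ⁱ⁾ − c⁽ⁱ⁾)`. -/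
structure Alg3Setting {n : ℕ} (Q P : Set (Vec n)) (ε : ℝ) (N : ℕ)
    (y z a b c : ℕ → Vec n) : Prop where
  hQbox : ∀ x ∈ Q, inBox x
  hQconv : Convex ℝ Q
  hPbox : ∀ x ∈ P, inBox x
  hPconv : Convex ℝ P
  hPdown : downClosed P
  hε0 : 0 < ε
  hε1 : ε < 1
  hεN : (N : ℝ) * ε = 1
  hy0Q : y 0 ∈ Q
  hy0min : ∀ x ∈ Q, normInf (y 0) ≤ normInf x
  hz0 : z 0 = 0
  haQ : ∀ i, 1 ≤ i → i ≤ N → a i ∈ Q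
  hbP : ∀ i, 1 ≤ i → i ≤ N → b i ∈ P
  hc : ∀ i, 1 ≤ i → i ≤ N → ∀ j, 0 ≤ c i j ∧ c i j ≤ z (i-1) j
  hyrec : ∀ i, 1 ≤ i → i ≤ N → y i = (1-ε) • y (i-1) + ε • a i
  hzrec : ∀ i, 1 ≤ i → i ≤ N → z i = z (i-1) + ε • (b i - c i)

set_option maxHeartbeats 1000000

/-- Lemma B.1 / `lem:membership_emp`: in the Algorithm 3 setting, for
every `0 ≤ i ≤ 1/ε`, `y⁽ⁱ⁾ ∈ Q` and `z⁽ⁱ⁾ ∈ εi·P`; consequently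
`y⁽ⁱ⁾ ⊛ z⁽ⁱ⁾ ∈ (Q + P) ∩ [0,1]^n`. -/
theorem stmt_19 {n : ℕ} (Q P : Set (Vec n)) (ε : ℝ) (N : ℕ) (y z a b c : ℕ → Vec n)
    (H : Alg3Setting Q P ε N y z a b c) :
    ∀ i ≤ N, y i ∈ Q ∧ (∃ x ∈ P, z i = (ε * i) • x) ∧
      psum (y i) (z i) ∈ (Q + P) ∩ {x : Vec n | inBox x} := by
  obtain ⟨hQbox, hQconv, hPbox, hPconv, hPdown, hε0, hε1, hεN, hy0Q, _, hz0, haQ, hbP, hc,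
    hyrec, hzrec⟩ := H
  have hN1 : 1 ≤ N := by
    rcases Nat.eq_zero_or_pos N with h | h
    · subst h; simp at hεN
    · exact h
  have key : ∀ i ≤ N, y i ∈ Q ∧ ∃ x ∈ P, z i = (ε * i) • x := by
    intro i
    induction i with
    | zero =>
      intro _
      exact ⟨hy0Q, b 1, hbP 1 le_rfl hN1, by simp [hz0]⟩
    | succ m ih =>
      intro hiN
      have hm : m ≤ N := Nat.le_of_succ_le hiN
      obtain ⟨hyQ, x, hxP, hzx⟩ := ih hm
      have h1 : 1 ≤ m + 1 := Nat.le_add_left 1 m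
      have hcb := hc (m+1) h1 hiN
      simp only [Nat.add_sub_cancel] at hcb
      have hzr := hzrec (m+1) h1 hiN
      simp only [Nat.add_sub_cancel] at hzr
      refine ⟨?_, ?_⟩
      · rw [hyrec (m+1) h1 hiN]
        simp only [Nat.add_sub_cancel]
        exact hQconv hyQ (haQ _ h1 hiN) (by linarith) (le_of_lt hε0) (by ring)
      · set v : Vec n := if m = 0 then b (m+1) else (ε * m)⁻¹ • (z m - ε • c (m+1)) with hv
        have hxbox := hPbox x hxP
        have hvP : v ∈ P := by
          rcases Nat.eq_zero_or_pos m with h0 | h0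
          · subst h0; simpa [hv] using hbP 1 le_rfl hiN
          · have hm0 : (m : ℝ) ≠ 0 := Nat.cast_ne_zero.mpr h0.ne'
            have hmpos : (0:ℝ) < ε * m := by
              have : (0:ℝ) < (m:ℝ) := by positivity
              positivity
            simp only [hv, if_neg h0.ne']
            refine hPdown _ x (fun j => ?_) (fun j => ?_) hxP
            · have h1 := (hcb j).1
              have h2 := (hcb j).2
              have hz : z m j = ε * m * x j := by rw [hzx]; simp [PiLp.smul_apply, smul_eq_mul]
              have : (0:ℝ) ≤ z m j - ε * c (m+1) j := by nlinarith
              simp only [PiLp.smul_apply, PiLp.sub_apply, smul_eq_mul]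
              exact mul_nonneg (le_of_lt (inv_pos.mpr hmpos)) this
            · have h1 := (hcb j).1
              have hz : z m j = ε * m * x j := by rw [hzx]; simp [PiLp.smul_apply, smul_eq_mul]
              simp only [PiLp.smul_apply, PiLp.sub_apply, smul_eq_mul]
              rw [inv_mul_le_iff₀ hmpos]
              nlinarith
        have hsum : ((m:ℝ)/(m+1)) + (1/(m+1)) = 1 := by
          field_simp
        have hx'P : ((m:ℝ)/(m+1)) • v + ((1:ℝ)/(m+1)) • b (m+1) ∈ P :=
          hPconv hvP (hbP _ h1 hiN) (by positivity) (by positivity) hsum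
        refine ⟨_, hx'P, ?_⟩
        have hc0 : m = 0 → ∀ j, c (m+1) j = 0 := by
          intro h0 j
          have h1 := (hcb j).1
          have h2 := (hcb j).2
          rw [h0] at h1 h2 ⊢
          rw [hz0] at h2
          simp only [PiLp.zero_apply] at h2
          linarith
        ext j
        simp only [hzr, PiLp.add_apply, PiLp.smul_apply, PiLp.sub_apply, smul_eq_mul]
        rcases Nat.eq_zero_or_pos m with h0 | h0
        · have hcz := hc0 h0 j
          subst h0
          simp only [hv, if_pos rfl]
          rw [hz0]
          simp only [PiLp.zero_apply, PiLp.smul_apply, smul_eq_mul, Nat.cast_zero,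
            Nat.cast_one]
          rw [hcz]
          ring
        · have hm0 : (m : ℝ) ≠ 0 := Nat.cast_ne_zero.mpr h0.ne'
          simp only [hv, if_neg h0.ne', PiLp.smul_apply, PiLp.sub_apply,
            smul_eq_mul, Nat.cast_add, Nat.cast_one]
          have hε0' : ε ≠ 0 := hε0.ne'
          have hm1 : (m:ℝ) + 1 ≠ 0 := by positivity
          field_simp
          ring
  intro i hiN
  obtain ⟨hyQ, x, hxP, hzx⟩ := key i hiN
  refine ⟨hyQ, ⟨x, hxP, hzx⟩, ?_⟩
  have hεi1 : ε * i ≤ 1 := by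
    have : (i:ℝ) ≤ (N:ℝ) := Nat.cast_le.mpr hiN
    nlinarith
  have hεi0 : 0 ≤ ε * i := by positivity
  have hxbox := hPbox x hxP
  have hzP : z i ∈ P := by
    refine hPdown _ x (fun j => ?_) (fun j => ?_) hxP
    · rw [hzx]; simp only [PiLp.smul_apply, smul_eq_mul]
      exact mul_nonneg hεi0 (hxbox j).1
    · rw [hzx]; simp only [PiLp.smul_apply, smul_eq_mul]
      nlinarith [(hxbox j).1]
  have hzbox := hPbox _ hzP
  have hybox := hQbox _ hyQ
  set w : Vec n := WithLp.toLp 2 (fun j => z i j * (1 - y i j)) with hw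
  have hwP : w ∈ P := by
    refine hPdown _ (z i) (fun j => ?_) (fun j => ?_) hzP
    · have h1 := (hybox j).2; have h2 := (hzbox j).1
      show (0:ℝ) ≤ z i j * (1 - y i j)
      nlinarith
    · have h1 := (hybox j).1; have h2 := (hzbox j).1
      show z i j * (1 - y i j) ≤ z i j
      nlinarith
  have hps : psum (y i) (z i) = y i + w := by
    ext j
    simp only [psum, PiLp.add_apply, hw, PiLp.toLp_apply]
    ring
  constructor
  · rw [hps]; exact Set.add_mem_add hyQ hwP
  · intro j
    have hy := hybox j
    have hz := hzbox j
    constructor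
    · show (0:ℝ) ≤ y i j + z i j - y i j * z i j
      nlinarith [hy.1, hy.2, hz.1, hz.2]
    · show y i j + z i j - y i j * z i j ≤ 1
      nlinarith [hy.1, hy.2, hz.1, hz.2]
end
end
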